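/- arXiv:1405.5567 — 5 statements merged into one kernel-verified Lean document; each statement's English description precedes it below -/
import Mathlib

section
/- Let I be an ideal of the formal power series ring C[[x₁,...,xₙ]] with maximal ideal m, and let m ∈ ℕ. If the image of I in the quotient ring C[[x]]/m^(m+1) (the ring of m-jets) has C-codimension at most m, then m^m ⊆ I. -/
open MvPowerSeries

lemma aux_chain {K W : Type*} [Field K] [AddCommGroup W] [Module K W]
    [FiniteDimensional K W] (B : ℕ → Submodule K W) (t : ℕ)
    (h : ∀ k < t, B (k + 1) < B k) :
    t + Module.finrank K (B t) ≤ Module.finrank K (B 0) := by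
  induction t with
  | zero => simp
  | succ t ih =>
    have h1 := Submodule.finrank_lt_finrank_of_lt (h t (lt_add_one t))
    have h2 := ih (fun k hk => h k (hk.trans (lt_add_one t)))
    omega

lemma aux_nakayama {R : Type*} [CommRing R] (𝔪 I : Ideal R) (hfg : 𝔪.FG)
    (hjac : 𝔪 ≤ Ideal.jacobson ⊥) (k : ℕ)
    (h : 𝔪 ^ k ≤ I ⊔ 𝔪 ^ (k + 1)) : 𝔪 ^ k ≤ I := by
  have hNfg : (Submodule.map I.mkQ (𝔪 ^ k)).FG :=
    Submodule.FG.map _ (Submodule.FG.pow hfg k)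
  have hImap : Submodule.map I.mkQ I = ⊥ := by
    rw [eq_bot_iff, Submodule.map_le_iff_le_comap]
    intro x hx
    simp [Submodule.Quotient.mk_eq_zero, hx]
  have key : Submodule.map I.mkQ (𝔪 ^ k) ≤ 𝔪 • Submodule.map I.mkQ (𝔪 ^ k) := by
    rw [← Submodule.map_smul'']
    have h𝔪 : (𝔪 • 𝔪 ^ k : Ideal R) = 𝔪 ^ (k + 1) := by
      rw [Ideal.smul_eq_mul, ← pow_succ']
    rw [h𝔪]
    calc Submodule.map I.mkQ (𝔪 ^ k)
        ≤ Submodule.map I.mkQ (I ⊔ 𝔪 ^ (k + 1)) := Submodule.map_mono h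
      _ = Submodule.map I.mkQ I ⊔ Submodule.map I.mkQ (𝔪 ^ (k + 1)) :=
          Submodule.map_sup _ _ _
      _ = Submodule.map I.mkQ (𝔪 ^ (k + 1)) := by rw [hImap, bot_sup_eq]
  have hbot := Submodule.eq_bot_of_le_smul_of_le_jacobson_bot 𝔪 _ hNfg key hjac
  intro x hx
  have hx' : I.mkQ x ∈ Submodule.map I.mkQ (𝔪 ^ k) := ⟨x, hx, rfl⟩
  rw [hbot, Submodule.mem_bot] at hx'
  exact (Submodule.Quotient.mk_eq_zero I).mp hx'

set_option synthInstance.maxHeartbeats 1000000 in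
set_option maxHeartbeats 2000000 in

/-- If the image of an ideal `I` of `ℂ[[x₁,…,xₙ]]` in the ring of `m`-jets
`ℂ[[x]]/𝔪^(m+1)` has ℂ-codimension at most `m`, then `𝔪^m ⊆ I`. -/
theorem mpow_le_of_jet_codim_le (n m : ℕ)
    (𝔪 : Ideal (MvPowerSeries (Fin n) ℂ))
    (h𝔪 : 𝔪 = Ideal.span (Set.range (X : Fin n → MvPowerSeries (Fin n) ℂ)))
    (I : Ideal (MvPowerSeries (Fin n) ℂ))
    (hcodim :
      Module.rank ℂ
        ((MvPowerSeries (Fin n) ℂ ⧸ (𝔪 ^ (m + 1))) ⧸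
          (I.map (Ideal.Quotient.mk (𝔪 ^ (m + 1))))) ≤ (m : Cardinal)) :
    𝔪 ^ m ≤ I := by
  classical
  have hfg : 𝔪.FG := by rw [h𝔪]; exact Submodule.fg_span (Set.finite_range _)
  have hjac : 𝔪 ≤ Ideal.jacobson ⊥ := by
    rw [h𝔪, Ideal.span_le]
    rintro _ ⟨i, rfl⟩
    rw [SetLike.mem_coe,
      IsLocalRing.jacobson_eq_maximalIdeal (⊥ : Ideal (MvPowerSeries (Fin n) ℂ)) bot_ne_top,
      IsLocalRing.mem_maximalIdeal]
    intro hu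
    have := MvPowerSeries.isUnit_iff_constantCoeff.mp hu
    rw [MvPowerSeries.constantCoeff_X] at this
    exact not_isUnit_zero this
  obtain ⟨k, hkm, hk⟩ : ∃ k ≤ m, I ⊔ 𝔪 ^ k = I ⊔ 𝔪 ^ (k + 1) := by
    by_contra hcon
    push_neg at hcon
    set J := I.map (Ideal.Quotient.mk (𝔪 ^ (m + 1))) with hJ
    let φ := (Ideal.Quotient.mkₐ ℂ J).comp (Ideal.Quotient.mkₐ ℂ (𝔪 ^ (m + 1)))
    have hsurj : Function.Surjective φ :=
      (Ideal.Quotient.mkₐ_surjective ℂ _).comp (Ideal.Quotient.mkₐ_surjective ℂ _)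
    have hker : ∀ x, φ x = 0 ↔ x ∈ I ⊔ 𝔪 ^ (m + 1) := by
      intro x
      have hc : I ⊔ 𝔪 ^ (m + 1)
          = Ideal.comap (Ideal.Quotient.mk (𝔪 ^ (m + 1))) J := by
        rw [hJ, Ideal.comap_map_of_surjective _ Ideal.Quotient.mk_surjective,
          ← RingHom.ker_eq_comap_bot, Ideal.mk_ker]
      rw [hc, Ideal.mem_comap]
      show (Ideal.Quotient.mkₐ ℂ J) ((Ideal.Quotient.mkₐ ℂ (𝔪 ^ (m + 1))) x) = 0 ↔ _
      rw [Ideal.Quotient.mkₐ_eq_mk, Ideal.Quotient.mkₐ_eq_mk,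
        Ideal.Quotient.eq_zero_iff_mem]
    set B : ℕ → Submodule ℂ _ := fun k =>
      Submodule.map φ.toLinearMap ((I ⊔ 𝔪 ^ k).restrictScalars ℂ) with hB
    have hcomap : ∀ k ≤ m + 1,
        Submodule.comap φ.toLinearMap (B k) = (I ⊔ 𝔪 ^ k).restrictScalars ℂ := by
      intro k hkm
      rw [hB, Submodule.comap_map_eq]
      refine sup_eq_left.mpr ?_
      intro x hx
      have hx' : x ∈ I ⊔ 𝔪 ^ (m + 1) := (hker x).mp hx
      rcases Submodule.mem_sup.mp hx' with ⟨a, ha, b, hb, rfl⟩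
      exact Submodule.add_mem _ (Submodule.mem_sup_left ha)
        (Submodule.mem_sup_right (Ideal.pow_le_pow_right hkm hb))
    have hstrict : ∀ k < m + 1, B (k + 1) < B k := by
      intro k hkm
      refine lt_of_le_of_ne (Submodule.map_mono ?_) ?_
      · exact fun x hx =>
          sup_le_sup_left (Ideal.pow_le_pow_right (Nat.le_succ k)) I hx
      · intro heq
        apply hcon k (by omega)
        have h2 := congrArg (Submodule.comap φ.toLinearMap) heq
        rw [hcomap k (by omega), hcomap (k + 1) (by omega)] at h2
        exact (Submodule.restrictScalars_injective ℂ _ _ h2).symm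
    have hB0 : B 0 = ⊤ := by
      have h0 : I ⊔ 𝔪 ^ 0 = ⊤ := by simp [Ideal.one_eq_top]
      rw [hB]
      simp only [h0, Submodule.restrictScalars_top, Submodule.map_top]
      exact LinearMap.range_eq_top.mpr hsurj
    have hBtop : B (m + 1) = ⊥ := by
      rw [eq_bot_iff]
      rintro x ⟨y, hy, rfl⟩
      simpa using (hker y).mpr hy
    have hfin : FiniteDimensional ℂ
        ((MvPowerSeries (Fin n) ℂ ⧸ (𝔪 ^ (m + 1))) ⧸ J) :=
      Module.rank_lt_aleph0_iff.mp (lt_of_le_of_lt hcodim (Cardinal.nat_lt_aleph0 m))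
    have hchain := aux_chain B (m + 1) hstrict
    rw [hB0, hBtop] at hchain
    simp only [finrank_bot, finrank_top, add_zero] at hchain
    have hle := Module.finrank_le_of_rank_le hcodim
    omega
  have h1 : 𝔪 ^ k ≤ I :=
    aux_nakayama 𝔪 I hfg hjac k (le_trans le_sup_right hk.le)
  exact le_trans (Ideal.pow_le_pow_right hkm) h1
end

section
/- Let I be an ideal of C[[x₁,...,xₙ]] and m ∈ ℕ. Then dim_ℂ C[[x]]/I > m if and only if dim_ℂ C_m[[x]]/jₘ(I) > m, where C_m[[x]] = C[[x]]/m^(m+1) is the ring of m-jets and jₘ is the natural projection. -/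
open MvPowerSeries

set_option maxHeartbeats 1000000
set_option synthInstance.maxHeartbeats 1000000

/-- Rank of quotients by ideals is antitone. -/
lemma aux_rank_quot_mono {A : Type*} [CommRing A] [Algebra ℂ A] {p q : Ideal A} (h : p ≤ q) :
    Module.rank ℂ (A ⧸ q) ≤ Module.rank ℂ (A ⧸ p) := by
  have h' : p ≤ q.comap (AlgHom.id ℂ A) := h
  have hs : Function.Surjective (Ideal.quotientMapₐ q (AlgHom.id ℂ A) h') := by
    intro x
    obtain ⟨a, rfl⟩ := Ideal.Quotient.mk_surjective x
    exact ⟨Ideal.Quotient.mk p a, by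
      simp [Ideal.quotient_map_mkₐ, Ideal.Quotient.mkₐ_eq_mk]⟩
  exact (Ideal.quotientMapₐ q (AlgHom.id ℂ A) h').toLinearMap.rank_le_of_surjective hs

/-- If `I ⊔ 𝔪^k = I ⊔ 𝔪^(k+1)` where `𝔪` is the ideal generated by the variables,
then `𝔪^k ≤ I` (Nakayama). -/
lemma aux_pow_le {n : ℕ} (I : Ideal (MvPowerSeries (Fin n) ℂ)) (k : ℕ)
    (h : I ⊔ (Ideal.span (Set.range (X : Fin n → MvPowerSeries (Fin n) ℂ)))^k =
      I ⊔ (Ideal.span (Set.range (X : Fin n → MvPowerSeries (Fin n) ℂ)))^(k+1)) :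
    (Ideal.span (Set.range (X : Fin n → MvPowerSeries (Fin n) ℂ)))^k ≤ I := by
  set R := MvPowerSeries (Fin n) ℂ
  set 𝔪 : Ideal R := Ideal.span (Set.range (X : Fin n → R)) with h𝔪
  set f := Ideal.Quotient.mk I with hf
  set 𝔫 : Ideal (R ⧸ I) := 𝔪.map f with h𝔫
  -- the image of 𝔪-powers
  have hmap : ∀ j : ℕ, (𝔪 ^ j).map f = 𝔫 ^ j := fun j => Ideal.map_pow f 𝔪 j
  have hpow : 𝔫 ^ k = 𝔫 ^ (k + 1) := by
    have := congrArg (Ideal.map f) h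
    rwa [Ideal.map_sup, Ideal.map_sup, Ideal.map_quotient_self, bot_sup_eq, bot_sup_eq,
      hmap, hmap] at this
  -- 𝔫 is contained in the Jacobson radical
  have hjac : 𝔫 ≤ Ideal.jacobson (⊥ : Ideal (R ⧸ I)) := by
    rw [h𝔫, h𝔪, Ideal.map_span, Ideal.span_le]
    rintro x ⟨y, ⟨i, rfl⟩, rfl⟩
    rw [SetLike.mem_coe, Ideal.mem_jacobson_bot]
    intro z
    obtain ⟨g, rfl⟩ := Ideal.Quotient.mk_surjective z
    have : IsUnit ((X i : R) * g + 1) := by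
      rw [MvPowerSeries.isUnit_iff_constantCoeff]
      simp
    have := this.map f
    simpa using this
  -- 𝔫^k is finitely generated
  have hfg : (𝔫 ^ k).FG := by
    apply Submodule.FG.pow
    rw [h𝔫, h𝔪]
    exact Ideal.FG.map (Submodule.fg_span (Set.finite_range _)) f
  -- Nakayama
  have hbot : 𝔫 ^ k = ⊥ := by
    refine Submodule.eq_bot_of_le_smul_of_le_jacobson_bot 𝔫 (𝔫 ^ k) hfg ?_ hjac
    rw [smul_eq_mul, ← pow_succ']
    exact hpow.le
  -- conclude
  have hmb : (𝔪 ^ k).map f = ⊥ := by rw [hmap]; exact hbot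
  intro x hx
  have hx0 : f x ∈ ((𝔪 ^ k).map f) := Ideal.mem_map_of_mem f hx
  rw [hmb, Ideal.mem_bot] at hx0
  exact Ideal.Quotient.eq_zero_iff_mem.mp hx0

set_option synthInstance.maxHeartbeats 1000000 in
/-- `dim_ℂ ℂ[[x]]/I > m` iff `dim_ℂ C_m[[x]]/jₘ(I) > m`, where `C_m[[x]] = ℂ[[x]]/𝔪^(m+1)`
is the ring of `m`-jets and `jₘ` the natural projection. -/
theorem rank_quotient_gt_iff_jet_rank_gt (n m : ℕ)
    (𝔪 : Ideal (MvPowerSeries (Fin n) ℂ))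
    (h𝔪 : 𝔪 = Ideal.span (Set.range (X : Fin n → MvPowerSeries (Fin n) ℂ)))
    (I : Ideal (MvPowerSeries (Fin n) ℂ)) :
    (m : Cardinal) < Module.rank ℂ (MvPowerSeries (Fin n) ℂ ⧸ I) ↔
      (m : Cardinal) <
        Module.rank ℂ
          ((MvPowerSeries (Fin n) ℂ ⧸ (𝔪 ^ (m + 1))) ⧸
            (I.map (Ideal.Quotient.mk (𝔪 ^ (m + 1))))) := by
  set R := MvPowerSeries (Fin n) ℂ
  -- identify the double quotient with R ⧸ (𝔪^(m+1) ⊔ I)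
  have hmap_eq : I.map (Ideal.Quotient.mkₐ ℂ (𝔪 ^ (m + 1))) =
      I.map (Ideal.Quotient.mk (𝔪 ^ (m + 1))) := rfl
  have e : ((R ⧸ (𝔪 ^ (m + 1))) ⧸ I.map (Ideal.Quotient.mk (𝔪 ^ (m + 1)))) ≃ₗ[ℂ]
      R ⧸ (𝔪 ^ (m + 1) ⊔ I) := by
    rw [← hmap_eq]
    exact (DoubleQuot.quotQuotEquivQuotSupₐ ℂ (𝔪 ^ (m + 1)) I).toLinearEquiv
  rw [e.rank_eq]
  constructor
  · -- hard direction
    intro hI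
    by_contra hc
    rw [not_lt] at hc
    -- Q is finite-dimensional of dimension ≤ m
    set J : Ideal R := 𝔪 ^ (m + 1) ⊔ I with hJ
    haveI : Module.Finite ℂ (R ⧸ J) :=
      Module.rank_lt_aleph0_iff.mp (lt_of_le_of_lt hc (Cardinal.nat_lt_aleph0 m))
    have hfr : Module.finrank ℂ (R ⧸ J) ≤ m := Module.finrank_le_of_rank_le hc
    -- the chain of ideals
    set g : ℕ → Submodule ℂ (R ⧸ J) := fun k =>
      ((I ⊔ 𝔪 ^ k).map (Ideal.Quotient.mk J)).restrictScalars ℂ with hg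
    have hJle : ∀ k, k ≤ m + 1 → J ≤ I ⊔ 𝔪 ^ k := by
      intro k hk
      rw [hJ]
      exact sup_le (le_sup_of_le_right (Ideal.pow_le_pow_right hk)) le_sup_left
    -- there must be a collapse in the chain, else dimension > m
    have hex : ∃ k, k ≤ m ∧ I ⊔ 𝔪 ^ k = I ⊔ 𝔪 ^ (k + 1) := by
      by_contra hne
      push_neg at hne
      have hstrict : ∀ k, k ≤ m → g (k + 1) < g k := by
        intro k hk
        have hle : g (k + 1) ≤ g k := fun x hx =>
          Ideal.map_mono (sup_le_sup_left (Ideal.pow_le_pow_right (Nat.le_succ k)) I) hx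
        refine lt_of_le_of_ne hle ?_
        intro heq
        apply hne k hk
        have heq' : (I ⊔ 𝔪 ^ (k + 1)).map (Ideal.Quotient.mk J) =
            (I ⊔ 𝔪 ^ k).map (Ideal.Quotient.mk J) :=
          Submodule.restrictScalars_injective ℂ _ _ heq
        have hcomap := congrArg (Ideal.comap (Ideal.Quotient.mk J)) heq'
        rw [Ideal.comap_map_of_surjective _ Ideal.Quotient.mk_surjective,
          Ideal.comap_map_of_surjective _ Ideal.Quotient.mk_surjective,
          ← RingHom.ker, Ideal.mk_ker,
          sup_eq_left.mpr (hJle (k + 1) (by omega)),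
          sup_eq_left.mpr (hJle k (by omega))] at hcomap
        exact hcomap.symm
      -- strictly decreasing finrank leads to contradiction
      have hmono : ∀ k, k ≤ m → Module.finrank ℂ (g (k + 1)) < Module.finrank ℂ (g k) :=
        fun k hk => Submodule.finrank_lt_finrank_of_lt (hstrict k hk)
      have hdec : ∀ k, k ≤ m + 1 →
          Module.finrank ℂ (g k) + k ≤ Module.finrank ℂ (g 0) := by
        intro k
        induction k with
        | zero => simp
        | succ k ih =>
          intro hk
          have h1 := hmono k (by omega)
          have h2 := ih (by omega)
          omega
      have h3 := hdec (m + 1) le_rfl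
      have h4 : Module.finrank ℂ (g 0) ≤ Module.finrank ℂ (R ⧸ J) := Submodule.finrank_le _
      omega
    obtain ⟨k, hkm, hkeq⟩ := hex
    have hpowle : 𝔪 ^ k ≤ I := by
      rw [h𝔪] at hkeq ⊢
      exact aux_pow_le I k hkeq
    have hJI : J = I := by
      rw [hJ]
      refine sup_eq_right.mpr ((Ideal.pow_le_pow_right (by omega)).trans hpowle)
    rw [hJI] at hc
    exact absurd hI (not_lt.mpr hc)
  · intro hQ
    exact lt_of_lt_of_le hQ (aux_rank_quot_mono le_sup_right)
end

section
/- For any monomial y = x_{i₁}⋯x_{iₘ} of degree m in C_m[[x]] = C[[x]]/m^(m+1), if the m+1 partial products y_j = x_{i₁}⋯x_{i_j} (j = 0,...,m, with y₀ = 1) are linearly dependent modulo an ideal J of C_m[[x]], then y ∈ J. -/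
open MvPowerSeries

private lemma prod_X_mem_pow_aux (n m : ℕ) (𝔪 : Ideal (MvPowerSeries (Fin n) ℂ))
    (h𝔪 : 𝔪 = Ideal.span (Set.range (X : Fin n → MvPowerSeries (Fin n) ℂ)))
    (i : Fin m → Fin n) (s : Finset (Fin m)) :
    (∏ l ∈ s, X (i l)) ∈ 𝔪 ^ s.card := by
  classical
  refine Finset.induction_on s (by simp) ?_
  intro a t ha ih
  rw [Finset.prod_insert ha, Finset.card_insert_of_notMem ha, pow_succ']
  exact Ideal.mul_mem_mul (by rw [h𝔪]; exact Ideal.subset_span ⟨i a, rfl⟩) ih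

set_option synthInstance.maxHeartbeats 1000000 in
set_option maxHeartbeats 1000000 in
/-- For a monomial `y = x_{i₁}⋯x_{iₘ}` of degree `m` in `C_m[[x]] = ℂ[[x]]/𝔪^(m+1)`,
if the `m+1` partial products `y_j = x_{i₁}⋯x_{i_j}` (with `y₀ = 1`) are linearly
dependent modulo an ideal `J`, then `y ∈ J`. -/
theorem monomial_mem_of_partial_products_linearDependent (n m : ℕ)
    (𝔪 : Ideal (MvPowerSeries (Fin n) ℂ))
    (h𝔪 : 𝔪 = Ideal.span (Set.range (X : Fin n → MvPowerSeries (Fin n) ℂ)))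
    (i : Fin m → Fin n)
    (J : Ideal (MvPowerSeries (Fin n) ℂ ⧸ (𝔪 ^ (m + 1))))
    (y : Fin (m + 1) → MvPowerSeries (Fin n) ℂ ⧸ (𝔪 ^ (m + 1)))
    (hy : ∀ j : Fin (m + 1), y j =
      Ideal.Quotient.mk (𝔪 ^ (m + 1))
        (∏ l ∈ Finset.univ.filter (fun l : Fin m => (l : ℕ) < (j : ℕ)), X (i l)))
    (c : Fin (m + 1) → ℂ) (hc : c ≠ 0)
    (hdep : (∑ j, c j • y j) ∈ J) :
    y (Fin.last m) ∈ J := by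
  classical
  have hX : ∀ t : Fin n, X t ∈ 𝔪 := fun t => by
    rw [h𝔪]; exact Ideal.subset_span ⟨t, rfl⟩
  set S := Finset.univ.filter (fun j : Fin (m+1) => c j ≠ 0) with hS
  have hSne : S.Nonempty := by
    rcases Function.ne_iff.mp hc with ⟨j, hj⟩
    exact ⟨j, by simpa [hS] using hj⟩
  set k := S.min' hSne with hk
  have hck : c k ≠ 0 := by
    have := S.min'_mem hSne
    simpa [hS] using this
  have hmin : ∀ j, c j ≠ 0 → k ≤ j := fun j hj => S.min'_le j (by simp [hS, hj])
  set A : Finset (Fin m) := Finset.univ.filter (fun l => (k:ℕ) ≤ (l:ℕ)) with hA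
  set Z := Ideal.Quotient.mk (𝔪 ^ (m+1)) (∏ l ∈ A, X (i l)) with hZ
  have hmem : Z * (∑ j, c j • y j) ∈ J := Ideal.mul_mem_left J Z hdep
  have hunivprod : (∏ l : Fin m, X (i l)) ∈ 𝔪 ^ m := by
    have := prod_X_mem_pow_aux n m 𝔪 h𝔪 i Finset.univ
    simpa using this
  have hZy : ∀ j : Fin (m+1), (k:ℕ) < (j:ℕ) → Z * y j = 0 := by
    intro j hj
    rw [hy j, hZ, ← map_mul, Ideal.Quotient.eq_zero_iff_mem]
    set B : Finset (Fin m) := Finset.univ.filter (fun l => (l:ℕ) < (j:ℕ)) with hB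
    have hAB : A ∪ B = Finset.univ := by
      ext l
      simp only [hA, hB, Finset.mem_union, Finset.mem_filter, Finset.mem_univ, true_and,
        iff_true]
      omega
    have hkm' : (k:ℕ) < m := lt_of_lt_of_le hj (Nat.lt_succ_iff.mp j.isLt)
    have hkAB : (⟨(k:ℕ), hkm'⟩ : Fin m) ∈ A ∩ B := by
      simp only [hA, hB, Finset.mem_inter, Finset.mem_filter, Finset.mem_univ, true_and]
      exact ⟨le_refl _, hj⟩
    rw [← Finset.prod_union_inter]
    have h1 : (∏ l ∈ A ∪ B, X (i l)) ∈ 𝔪 ^ m := by rw [hAB]; exact hunivprod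
    have h2 : (∏ l ∈ A ∩ B, X (i l)) ∈ 𝔪 := by
      rw [← Finset.mul_prod_erase _ _ hkAB]
      exact Ideal.mul_mem_right _ _ (hX _)
    rw [pow_succ]
    exact Ideal.mul_mem_mul h1 h2
  have hZk : Z * y k = y (Fin.last m) := by
    rw [hy k, hy (Fin.last m), hZ, ← map_mul]
    congr 1
    have huniv : Finset.univ.filter
        (fun l : Fin m => (l : ℕ) < ((Fin.last m : Fin (m+1)) : ℕ)) = Finset.univ := by
      ext l
      simp only [Finset.mem_filter, Finset.mem_univ, true_and, Fin.val_last, iff_true]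
      exact l.isLt
    rw [huniv]
    set B : Finset (Fin m) := Finset.univ.filter (fun l => (l:ℕ) < (k:ℕ)) with hB
    have hAB : A ∪ B = Finset.univ := by
      ext l
      simp only [hA, hB, Finset.mem_union, Finset.mem_filter, Finset.mem_univ, true_and,
        iff_true]
      omega
    have hABi : A ∩ B = ∅ := by
      ext l
      simp only [hA, hB, Finset.mem_inter, Finset.mem_filter, Finset.mem_univ, true_and,
        Finset.notMem_empty, iff_false, not_and, not_lt]
      omega
    calc (∏ l ∈ A, X (i l)) * ∏ l ∈ B, X (i l)
        = (∏ l ∈ A ∪ B, X (i l)) * ∏ l ∈ A ∩ B, X (i l) := (Finset.prod_union_inter).symm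
      _ = ∏ l : Fin m, X (i l) := by rw [hAB, hABi]; simp
  have hsum : Z * (∑ j, c j • y j) = c k • y (Fin.last m) := by
    rw [Finset.mul_sum]
    rw [Finset.sum_eq_single k]
    · rw [mul_smul_comm, hZk]
    · intro j _ hjk
      by_cases hcj : c j = 0
      · simp [hcj]
      · have hkj : (k:ℕ) < (j:ℕ) := by
          have h1 : k ≤ j := hmin j hcj
          have h2 : k ≠ j := Ne.symm hjk
          have : k < j := lt_of_le_of_ne h1 h2
          exact this
        rw [mul_smul_comm, hZy j hkj, smul_zero]
    · intro h
      exact absurd (Finset.mem_univ k) h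
  rw [hsum] at hmem
  have hfin : ((c k)⁻¹ • (c k • y (Fin.last m))) ∈ J :=
    J.smul_of_tower_mem ((c k)⁻¹) hmem
  rwa [smul_smul, inv_mul_cancel₀ hck, one_smul] at hfin
end

section
/- Let A be an n×n complex matrix with eigenvalues λ₁,...,λₙ, all nonzero. Then every entry of A^t for t ∈ ℤ, viewed as a function of t, lies in the ℂ-algebra generated by the functions t ↦ λᵢ^t (i = 1,...,n) and t ↦ t. -/
open Polynomial

namespace MatrixZpowAux

lemma binom_sub (z : ℂ) (m : ℕ) :
    (z + 1) ^ m - z ^ m = ∑ k ∈ Finset.range m, (m.choose k : ℂ) * z ^ k := by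
  rw [add_pow, Finset.sum_range_succ]
  simp [mul_comm]

variable (Sa : Subalgebra ℂ (ℤ → ℂ))

/-- Functions `g` admitting a particular solution `h ∈ Sa` of `h(t+1) = l·h(t) + g(t)`. -/
noncomputable def solSub (l : ℂ) : Submodule ℂ (ℤ → ℂ) where
  carrier := {g | ∃ h ∈ Sa, ∀ t : ℤ, h (t + 1) = l * h t + g t}
  add_mem' := by
    rintro g1 g2 ⟨h1, h1m, e1⟩ ⟨h2, h2m, e2⟩
    exact ⟨h1 + h2, add_mem h1m h2m, fun t => by
      simp only [Pi.add_apply, e1 t, e2 t]; ring⟩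
  zero_mem' := ⟨0, zero_mem _, fun t => by simp⟩
  smul_mem' := by
    rintro c g ⟨h, hm, e⟩
    exact ⟨c • h, Subalgebra.smul_mem _ hm c, fun t => by
      simp only [Pi.smul_apply, smul_eq_mul, e t]; ring⟩

lemma mono_mem_sol (hx : (fun t : ℤ => (t : ℂ)) ∈ Sa) (l : ℂ) (hl : l ≠ 0) :
    ∀ (m : ℕ) (μ : ℂ), μ ≠ 0 → (fun t : ℤ => μ ^ t) ∈ Sa →
      (fun t : ℤ => (t : ℂ) ^ m * μ ^ t) ∈ solSub Sa l := by
  intro m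
  induction m using Nat.strong_induction_on with
  | _ m IH =>
  intro μ hμ hμm
  set v : ℕ → (ℤ → ℂ) := fun k => fun t : ℤ => (t : ℂ) ^ k * μ ^ t with hv
  by_cases hμl : μ = l
  · subst hμl
    set h0 : ℤ → ℂ := fun t => μ⁻¹ * ((t : ℂ) ^ (m + 1) * μ ^ t) with hh0
    have h0mem : h0 ∈ Sa := by
      have e : h0 = μ⁻¹ • ((fun t : ℤ => (t : ℂ)) ^ (m + 1) * (fun t : ℤ => μ ^ t)) := by
        funext t; simp [hh0]
      rw [e]
      exact Subalgebra.smul_mem _ (mul_mem (pow_mem hx _) hμm) _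
    have g0 : (fun t : ℤ => h0 (t + 1) - μ * h0 t) ∈ solSub Sa μ :=
      ⟨h0, h0mem, fun t => by ring⟩
    have gval : (fun t : ℤ => h0 (t + 1) - μ * h0 t)
        = ∑ k ∈ Finset.range (m + 1), ((m + 1).choose k : ℂ) • v k := by
      funext t
      have h1 : μ ^ (t + 1) = μ * μ ^ t := by rw [zpow_add_one₀ hμ]; ring
      have h2 := binom_sub (t : ℂ) (m + 1)
      simp only [hh0, Finset.sum_apply, Pi.smul_apply, hv, smul_eq_mul, h1]
      push_cast
      have key : ∑ x ∈ Finset.range (m + 1), ((m + 1).choose x : ℂ) * ((t : ℂ) ^ x * μ ^ t)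
          = (((t : ℂ) + 1) ^ (m + 1) - (t : ℂ) ^ (m + 1)) * μ ^ t := by
        rw [h2, Finset.sum_mul]
        exact Finset.sum_congr rfl fun k _ => by ring
      rw [key]
      field_simp
    rw [gval, Finset.sum_range_succ] at g0
    have hlow : ∑ k ∈ Finset.range m, ((m + 1).choose k : ℂ) • v k ∈ solSub Sa μ :=
      Submodule.sum_mem _ fun k hk =>
        Submodule.smul_mem _ _ (IH k (Finset.mem_range.mp hk) μ hμ hμm)
    have hvm : ((m + 1).choose m : ℂ) • v m ∈ solSub Sa μ := by
      have := Submodule.sub_mem _ g0 hlow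
      simpa using this
    have hc : ((m + 1).choose m : ℂ) ≠ 0 := by
      rw [Nat.choose_succ_self_right]
      exact Nat.cast_ne_zero.mpr (Nat.succ_ne_zero m)
    have := Submodule.smul_mem _ (((m + 1).choose m : ℂ))⁻¹ hvm
    rwa [inv_smul_smul₀ hc] at this
  · -- μ ≠ l
    set h0 : ℤ → ℂ := fun t => (μ - l)⁻¹ * ((t : ℂ) ^ m * μ ^ t) with hh0
    have hml : μ - l ≠ 0 := sub_ne_zero.mpr hμl
    have h0mem : h0 ∈ Sa := by
      have e : h0 = (μ - l)⁻¹ • ((fun t : ℤ => (t : ℂ)) ^ m * (fun t : ℤ => μ ^ t)) := by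
        funext t; simp [hh0]
      rw [e]
      exact Subalgebra.smul_mem _ (mul_mem (pow_mem hx _) hμm) _
    have g0 : (fun t : ℤ => h0 (t + 1) - l * h0 t) ∈ solSub Sa l :=
      ⟨h0, h0mem, fun t => by ring⟩
    have gval : (fun t : ℤ => h0 (t + 1) - l * h0 t)
        = v m + ∑ k ∈ Finset.range m, ((μ - l)⁻¹ * μ * (m.choose k : ℂ)) • v k := by
      funext t
      have h1 : μ ^ (t + 1) = μ * μ ^ t := by rw [zpow_add_one₀ hμ]; ring
      have h2 := binom_sub (t : ℂ) m
      simp only [hh0, Pi.add_apply, Finset.sum_apply, Pi.smul_apply, hv, smul_eq_mul, h1]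
      push_cast
      have key : ∑ x ∈ Finset.range m, ((μ - l)⁻¹ * μ * (m.choose x : ℂ)) * ((t : ℂ) ^ x * μ ^ t)
          = (μ - l)⁻¹ * μ * μ ^ t * ((((t : ℂ) + 1) ^ m - (t : ℂ) ^ m)) := by
        rw [h2, Finset.mul_sum]
        exact Finset.sum_congr rfl fun k _ => by ring
      rw [key]
      field_simp
      ring
    rw [gval] at g0
    have hlow : ∑ k ∈ Finset.range m, ((μ - l)⁻¹ * μ * (m.choose k : ℂ)) • v k
        ∈ solSub Sa l :=
      Submodule.sum_mem _ fun k hk =>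
        Submodule.smul_mem _ _ (IH k (Finset.mem_range.mp hk) μ hμ hμm)
    have := Submodule.sub_mem _ g0 hlow
    simpa using this

lemma adjoin_le_sol (s : Set (ℤ → ℂ))
    (hx : (fun t : ℤ => (t : ℂ)) ∈ Algebra.adjoin ℂ s)
    (hs : ∀ u ∈ s, ∃ (m : ℕ) (μ : ℂ), μ ≠ 0 ∧
        (fun t : ℤ => μ ^ t) ∈ Algebra.adjoin ℂ s ∧
        u = fun t : ℤ => (t : ℂ) ^ m * μ ^ t)
    (l : ℂ) (hl : l ≠ 0) :
    ∀ g ∈ Algebra.adjoin ℂ s, g ∈ solSub (Algebra.adjoin ℂ s) l := by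
  intro g hg
  have h1 : (Subalgebra.toSubmodule (Algebra.adjoin ℂ s) : Set (ℤ → ℂ))
      ⊆ (solSub (Algebra.adjoin ℂ s) l : Set (ℤ → ℂ)) := by
    rw [Algebra.adjoin_eq_span]
    refine Submodule.span_le.mpr ?_
    intro u hu
    rw [SetLike.mem_coe] at hu
    have hmono : ∃ (m : ℕ) (μ : ℂ), μ ≠ 0 ∧
        (fun t : ℤ => μ ^ t) ∈ Algebra.adjoin ℂ s ∧
        u = fun t : ℤ => (t : ℂ) ^ m * μ ^ t := by
      induction hu using Submonoid.closure_induction with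
      | mem x hxs => exact hs x hxs
      | one =>
        exact ⟨0, 1, one_ne_zero, by convert (Algebra.adjoin ℂ s).one_mem using 1; funext t; simp, by
          funext t; simp⟩
      | mul x y hxc hyc ihx ihy =>
        obtain ⟨m1, μ1, h1, h2, rfl⟩ := ihx
        obtain ⟨m2, μ2, h3, h4, rfl⟩ := ihy
        refine ⟨m1 + m2, μ1 * μ2, mul_ne_zero h1 h3, ?_, ?_⟩
        · have : (fun t : ℤ => (μ1 * μ2) ^ t)
              = (fun t : ℤ => μ1 ^ t) * (fun t : ℤ => μ2 ^ t) := by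
            funext t; simp [mul_zpow]
          rw [this]; exact mul_mem h2 h4
        · funext t
          simp [Pi.mul_apply, mul_zpow, pow_add]
          ring
    obtain ⟨m, μ, h1, h2, rfl⟩ := hmono
    exact mono_mem_sol _ hx l hl m μ h1 h2
  exact h1 hg

lemma step_mem (s : Set (ℤ → ℂ))
    (hx : (fun t : ℤ => (t : ℂ)) ∈ Algebra.adjoin ℂ s)
    (hs : ∀ u ∈ s, ∃ (m : ℕ) (μ : ℂ), μ ≠ 0 ∧
        (fun t : ℤ => μ ^ t) ∈ Algebra.adjoin ℂ s ∧
        u = fun t : ℤ => (t : ℂ) ^ m * μ ^ t)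
    (l : ℂ) (hl : l ≠ 0)
    (hlm : (fun t : ℤ => l ^ t) ∈ Algebra.adjoin ℂ s)
    (f g : ℤ → ℂ) (hg : g ∈ Algebra.adjoin ℂ s)
    (hf : ∀ t : ℤ, f (t + 1) = l * f t + g t) :
    f ∈ Algebra.adjoin ℂ s := by
  obtain ⟨h, hm, he⟩ := adjoin_le_sol s hx hs l hl g hg
  have hrec : ∀ t : ℤ, f (t + 1) - h (t + 1) = l * (f t - h t) := by
    intro t; rw [hf t, he t]; ring
  have key : ∀ t : ℤ, f t - h t = (f 0 - h 0) * l ^ t := by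
    intro t
    induction t using Int.induction_on with
    | zero => simp
    | succ k ih =>
      rw [hrec k, ih, zpow_add_one₀ hl]
      ring
    | pred k ih =>
      have h1 := hrec (-(k : ℤ) - 1)
      rw [sub_add_cancel] at h1
      have h2 : f (-(k : ℤ) - 1) - h (-(k : ℤ) - 1) = l⁻¹ * (f (-(k : ℤ)) - h (-(k : ℤ))) := by
        field_simp [h1]
        rw [h1]; ring
      rw [h2, ih, zpow_sub_one₀ hl]
      ring
  have hfe : f = h + (f 0 - h 0) • (fun t : ℤ => l ^ t) := by
    funext t
    simp only [Pi.add_apply, Pi.smul_apply, smul_eq_mul]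
    linear_combination key t
  rw [hfe]
  exact add_mem hm (Subalgebra.smul_mem _ hlm _)

lemma foldl_eq (n : ℕ) (A : Matrix (Fin n) (Fin n) ℂ) (hA : IsUnit A.det)
    (lam : Fin n → ℂ) (j k : Fin n) :
    ∀ (L : List (Fin n)) (B : Matrix (Fin n) (Fin n) ℂ),
      L.foldl (fun g i => fun t : ℤ => g (t + 1) - lam i * g t)
          (fun t : ℤ => (B * A ^ t) j k)
        = fun t : ℤ => ((B * (L.map fun i => A - lam i • 1).prod) * A ^ t) j k := by
  intro L
  induction L with
  | nil => intro B; simp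
  | cons i L ih =>
    intro B
    have hD : (fun t : ℤ => (B * A ^ (t + 1)) j k - lam i * (B * A ^ t) j k)
        = fun t : ℤ => ((B * (A - lam i • 1)) * A ^ t) j k := by
      funext t
      have hzp : A ^ (t + 1) = A * A ^ t := by
        rw [add_comm, Matrix.zpow_add hA, zpow_one]
      rw [hzp]
      simp [Matrix.mul_sub, Matrix.sub_mul, Matrix.mul_smul, Matrix.smul_mul,
        Matrix.sub_apply, Matrix.smul_apply, Matrix.mul_one, mul_assoc, smul_eq_mul]
    rw [List.foldl_cons]
    show List.foldl (fun g i => fun t : ℤ => g (t + 1) - lam i * g t)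
        (fun t : ℤ => (B * A ^ (t + 1)) j k - lam i * (B * A ^ t) j k) L
        = fun t : ℤ => ((B * ((i :: L).map fun i => A - lam i • 1).prod) * A ^ t) j k
    rw [hD, ih]
    funext t
    rw [List.map_cons, List.prod_cons, ← mul_assoc]

lemma list_step (n : ℕ) (lam : Fin n → ℂ) (hlam : ∀ i, lam i ≠ 0) :
    ∀ (L : List (Fin n)) (f : ℤ → ℂ),
      L.foldl (fun g i => fun t : ℤ => g (t + 1) - lam i * g t) f = 0 →
      f ∈ Algebra.adjoin ℂ
        ((Set.range fun i : Fin n => fun t : ℤ => lam i ^ t) ∪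
          {fun t : ℤ => (t : ℂ)}) := by
  set s : Set (ℤ → ℂ) :=
    (Set.range fun i : Fin n => fun t : ℤ => lam i ^ t) ∪ {fun t : ℤ => (t : ℂ)} with hsdef
  have hx : (fun t : ℤ => (t : ℂ)) ∈ Algebra.adjoin ℂ s :=
    Algebra.subset_adjoin (Or.inr rfl)
  have hs : ∀ u ∈ s, ∃ (m : ℕ) (μ : ℂ), μ ≠ 0 ∧
      (fun t : ℤ => μ ^ t) ∈ Algebra.adjoin ℂ s ∧
      u = fun t : ℤ => (t : ℂ) ^ m * μ ^ t := by
    rintro u (⟨i, rfl⟩ | rfl)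
    · exact ⟨0, lam i, hlam i, Algebra.subset_adjoin (Or.inl ⟨i, rfl⟩), by
        funext t; simp⟩
    · refine ⟨1, 1, one_ne_zero, ?_, by funext t; simp⟩
      have e : (fun t : ℤ => (1 : ℂ) ^ t) = (1 : ℤ → ℂ) := by
        funext t; simp
      rw [e]
      exact one_mem _
  intro L
  induction L with
  | nil =>
    intro f h0
    rw [List.foldl_nil] at h0
    rw [h0]
    exact zero_mem _
  | cons i L ih =>
    intro f h0
    rw [List.foldl_cons] at h0
    have hg := ih _ h0
    exact step_mem s hx hs (lam i) (hlam i)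
      (Algebra.subset_adjoin (Or.inl ⟨i, rfl⟩)) f _ hg (fun t => by ring)

end MatrixZpowAux

/-- Every entry of `A^t` (`t ∈ ℤ`) of an invertible `n×n` complex matrix `A` with
(nonzero) eigenvalues `λ₁,…,λₙ`, as a function of `t ∈ ℤ`, lies in the ℂ-algebra
generated by the functions `t ↦ λᵢ^t` and `t ↦ t`. -/
theorem matrix_zpow_entries_mem_adjoin (n : ℕ) (A : Matrix (Fin n) (Fin n) ℂ)
    (hA : IsUnit A.det) (lam : Fin n → ℂ) (hlam : ∀ i, lam i ≠ 0)
    (hchar : A.charpoly = ∏ i, (Polynomial.X - Polynomial.C (lam i))) :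
    ∀ j k : Fin n,
      (fun t : ℤ => (A ^ t) j k) ∈
        Algebra.adjoin ℂ
          ((Set.range fun i : Fin n => fun t : ℤ => lam i ^ t) ∪
            {fun t : ℤ => (t : ℂ)}) := by
  intro j k
  have hCH : ((List.finRange n).map fun i => A - lam i • 1).prod = 0 := by
    have h1 := Matrix.aeval_self_charpoly A
    rw [hchar, ← List.prod_ofFn (f := fun i => Polynomial.X - Polynomial.C (lam i)),
      map_list_prod, List.map_ofFn] at h1
    rw [List.ofFn_eq_map] at h1
    rw [← h1]
    congr 1
    refine List.map_congr_left fun i _ => ?_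
    simp [Function.comp, Algebra.algebraMap_eq_smul_one]
  have h2 := MatrixZpowAux.foldl_eq n A hA lam j k (List.finRange n) 1
  rw [hCH] at h2
  have h3 : (fun t : ℤ => (A ^ t) j k)
      = fun t : ℤ => ((1 : Matrix (Fin n) (Fin n) ℂ) * A ^ t) j k := by
    funext t; rw [one_mul]
  rw [h3]
  exact MatrixZpowAux.list_step n lam hlam (List.finRange n) _ (by
    rw [h2]; funext t; simp)
end

section
/- Let V be a derivation of C[[x₁,...,xₙ]] preserving the maximal ideal with linear part having eigenvalues λ₁,...,λₙ. Then for every p, the spectrum of the induced operator j^p V on C_p[[x]] is contained in the additive semigroup {Σᵢ αᵢλᵢ : α ∈ ℕⁿ, 1 ≤ |α| ≤ p} generated by λ₁,...,λₙ. -/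
open MvPowerSeries

namespace JetSpectrumAux

open TensorProduct Matrix

noncomputable section

variable {n : ℕ}

/-- total degree of an exponent -/
def deg (β : Fin n →₀ ℕ) : ℕ := ∑ i, β i

lemma deg_add (β γ : Fin n →₀ ℕ) : deg (β + γ) = deg β + deg γ := by
  simp [deg, Finset.sum_add_distrib]

lemma deg_single (j : Fin n) (m : ℕ) : deg (Finsupp.single j m) = m := by
  simp [deg, Finsupp.single_apply]

lemma deg_zero : deg (0 : Fin n →₀ ℕ) = 0 := by simp [deg]

lemma eq_zero_of_deg_eq_zero {β : Fin n →₀ ℕ} (h : deg β = 0) : β = 0 := by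
  ext i
  simpa using Finset.sum_eq_zero_iff.mp h i (Finset.mem_univ i)

lemma exists_ne_zero_of_deg_ne_zero {β : Fin n →₀ ℕ} (h : deg β ≠ 0) : ∃ i, β i ≠ 0 := by
  by_contra hc
  push_neg at hc
  exact h (by simp [deg, hc])

lemma deg_eq_one {β : Fin n →₀ ℕ} (h : deg β = 1) : ∃ j, β = Finsupp.single j 1 := by
  obtain ⟨j, hj⟩ := exists_ne_zero_of_deg_ne_zero (by rw [h]; exact one_ne_zero)
  refine ⟨j, ?_⟩
  have hle : β j ≤ 1 := by
    rw [← h]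
    exact Finset.single_le_sum (fun i _ => Nat.zero_le _) (Finset.mem_univ j)
  have hbj : β j = 1 := by omega
  have hrest : ∀ i, i ≠ j → β i = 0 := by
    intro i hij
    have h2 : β j + ∑ t ∈ Finset.univ.erase j, β t = 1 := by
      rw [← h, deg, Finset.add_sum_erase _ _ (Finset.mem_univ j)]
    have h3 : ∑ t ∈ Finset.univ.erase j, β t = 0 := by omega
    exact Finset.sum_eq_zero_iff.mp h3 i (by simp [hij])
  ext i
  rcases eq_or_ne i j with rfl | hij
  · simp [hbj, Finsupp.single_apply]
  · simp [hrest i hij, Finsupp.single_apply, Ne.symm hij]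

/-- The ideal of power series whose coefficients vanish below total degree `k`. -/
def Jdeg (n k : ℕ) : Ideal (MvPowerSeries (Fin n) ℂ) where
  carrier := {f | ∀ β, deg β < k → MvPowerSeries.coeff β f = 0}
  zero_mem' := by intro β _; simp
  add_mem' := by
    intro a b ha hb β hβ
    simp [_root_.map_add, ha β hβ, hb β hβ]
  smul_mem' := by
    intro c f hf β hβ
    rw [smul_eq_mul, MvPowerSeries.coeff_mul]
    apply Finset.sum_eq_zero
    rintro ⟨u, v⟩ huv
    have huv' : u + v = β := Finset.HasAntidiagonal.mem_antidiagonal.mp huv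
    have hd : deg v < k := by
      have : deg u + deg v = deg β := by rw [← deg_add, huv']
      omega
    rw [hf v hd, mul_zero]

lemma mem_Jdeg {k : ℕ} {f : MvPowerSeries (Fin n) ℂ} :
    f ∈ Jdeg n k ↔ ∀ β, deg β < k → MvPowerSeries.coeff β f = 0 := Iff.rfl

lemma Jdeg_smul {k : ℕ} (c : ℂ) {f : MvPowerSeries (Fin n) ℂ} (hf : f ∈ Jdeg n k) :
    c • f ∈ Jdeg n k := by
  intro β hβ
  rw [_root_.map_smul, hf β hβ, smul_zero]

lemma Jdeg_mul_mem {a b : ℕ} {x y : MvPowerSeries (Fin n) ℂ}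
    (hx : x ∈ Jdeg n a) (hy : y ∈ Jdeg n b) : x * y ∈ Jdeg n (a + b) := by
  intro β hβ
  rw [MvPowerSeries.coeff_mul]
  apply Finset.sum_eq_zero
  rintro ⟨u, v⟩ huv
  have huv' : u + v = β := Finset.HasAntidiagonal.mem_antidiagonal.mp huv
  have hd : deg u + deg v < a + b := by rw [← deg_add, huv']; exact hβ
  rcases lt_or_ge (deg u) a with h | h
  · rw [hx u h, zero_mul]
  · rw [hy v (by omega), mul_zero]


/-- selector: the minimal index in the support -/
def sel (β : Fin n →₀ ℕ) : ℕ :=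
  if h : β.support.Nonempty then ((β.support.min' h : Fin n) : ℕ) else 0

lemma sel_spec {β : Fin n →₀ ℕ} (h : β ≠ 0) :
    ∃ i : Fin n, i ∈ β.support ∧ (i : ℕ) = sel β := by
  have hne : β.support.Nonempty := Finsupp.support_nonempty_iff.mpr h
  exact ⟨β.support.min' hne, β.support.min'_mem hne, by simp [sel, hne]⟩

/-- splitting of a power series with zero constant term along first-variable choice -/
def gpart (f : MvPowerSeries (Fin n) ℂ) (i : Fin n) : MvPowerSeries (Fin n) ℂ := fun γ =>
  if sel (γ + Finsupp.single i 1) = (i : ℕ)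
    then MvPowerSeries.coeff (γ + Finsupp.single i 1) f else 0

lemma coeff_gpart (f : MvPowerSeries (Fin n) ℂ) (i : Fin n) (γ : Fin n →₀ ℕ) :
    MvPowerSeries.coeff γ (gpart f i) =
      if sel (γ + Finsupp.single i 1) = (i : ℕ)
        then MvPowerSeries.coeff (γ + Finsupp.single i 1) f else 0 := rfl

lemma eq_sum_X_mul_gpart (f : MvPowerSeries (Fin n) ℂ)
    (h0 : MvPowerSeries.coeff 0 f = 0) :
    f = ∑ i, MvPowerSeries.X i * gpart f i := by
  apply MvPowerSeries.ext
  intro β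
  rw [_root_.map_sum]
  have hterm : ∀ i : Fin n,
      MvPowerSeries.coeff β (MvPowerSeries.X i * gpart f i) =
        if Finsupp.single i 1 ≤ β then
          (if sel β = (i : ℕ) then MvPowerSeries.coeff β f else 0) else 0 := by
    intro i
    rw [MvPowerSeries.X_def, MvPowerSeries.coeff_monomial_mul]
    by_cases h1 : Finsupp.single i 1 ≤ β
    · rw [if_pos h1, if_pos h1, one_mul, coeff_gpart, tsub_add_cancel_of_le h1]
    · rw [if_neg h1, if_neg h1]
  simp_rw [hterm]
  rcases eq_or_ne β 0 with rfl | hβ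
  · rw [h0]
    apply (Finset.sum_eq_zero ?_).symm
    intro i _
    rw [if_neg]
    intro hle
    have := hle i
    simp at this
  · obtain ⟨i₀, hi₀s, hi₀⟩ := sel_spec hβ
    rw [Finset.sum_eq_single i₀]
    · rw [if_pos, if_pos hi₀.symm]
      rw [Finsupp.single_le_iff]
      exact Nat.one_le_iff_ne_zero.mpr (Finsupp.mem_support_iff.mp hi₀s)
    · intro i _ hii
      split_ifs with h1 h2
      · exact absurd (Fin.val_injective (hi₀.trans h2)).symm hii
      · rfl
      · rfl
    · intro hmem
      exact absurd (Finset.mem_univ i₀) hmem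

lemma gpart_mem_Jdeg {k : ℕ} {f : MvPowerSeries (Fin n) ℂ} (hf : f ∈ Jdeg n (k + 1))
    (i : Fin n) : gpart f i ∈ Jdeg n k := by
  rw [mem_Jdeg]
  intro γ hγ
  rw [coeff_gpart]
  split_ifs with h1
  · apply mem_Jdeg.mp hf
    rw [deg_add, deg_single]
    omega
  · rfl


/-- the maximal ideal -/
def mIdeal (n : ℕ) : Ideal (MvPowerSeries (Fin n) ℂ) :=
  Ideal.span (Set.range (MvPowerSeries.X : Fin n → MvPowerSeries (Fin n) ℂ))

lemma X_mem_mIdeal (i : Fin n) : MvPowerSeries.X i ∈ mIdeal n :=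
  Ideal.subset_span ⟨i, rfl⟩

lemma mIdeal_le_Jdeg : mIdeal n ≤ Jdeg n 1 := by
  rw [mIdeal, Ideal.span_le]
  rintro - ⟨i, rfl⟩
  rw [SetLike.mem_coe, mem_Jdeg]
  intro β hβ
  have hβ0 : β = 0 := eq_zero_of_deg_eq_zero (by omega)
  subst hβ0
  rw [MvPowerSeries.coeff_zero_eq_constantCoeff_apply, MvPowerSeries.constantCoeff_X]

lemma pow_mIdeal_le_Jdeg (k : ℕ) : mIdeal n ^ k ≤ Jdeg n k := by
  induction k with
  | zero =>
      intro f _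
      rw [mem_Jdeg]
      intro β hβ
      omega
  | succ k ih =>
      rw [pow_succ]
      refine le_trans (Ideal.mul_mono ih mIdeal_le_Jdeg) ?_
      rw [Ideal.mul_le]
      intro r hr s hs
      exact Jdeg_mul_mem hr hs

lemma Jdeg_le_pow_mIdeal (k : ℕ) : Jdeg n k ≤ mIdeal n ^ k := by
  induction k with
  | zero => rw [pow_zero, Ideal.one_eq_top]; exact le_top
  | succ k ih =>
      intro f hf
      have h0 : MvPowerSeries.coeff 0 f = 0 :=
        mem_Jdeg.mp hf 0 (by rw [deg_zero]; omega)
      rw [eq_sum_X_mul_gpart f h0]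
      apply Ideal.sum_mem
      intro i _
      rw [pow_succ']
      exact Ideal.mul_mem_mul (X_mem_mIdeal i) (ih (gpart_mem_Jdeg hf i))

lemma V_mem_pow (V : Derivation ℂ (MvPowerSeries (Fin n) ℂ) (MvPowerSeries (Fin n) ℂ))
    (hVm : ∀ f ∈ mIdeal n, V f ∈ mIdeal n) :
    ∀ k, ∀ f ∈ mIdeal n ^ k, V f ∈ mIdeal n ^ k := by
  intro k
  induction k with
  | zero => intro f _; rw [pow_zero, Ideal.one_eq_top]; exact Submodule.mem_top
  | succ k ih =>
      intro f hf
      rw [pow_succ] at hf ⊢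
      refine Submodule.mul_induction_on hf ?_ ?_
      · intro a ha b hb
        rw [Derivation.leibniz, smul_eq_mul, smul_eq_mul]
        refine Ideal.add_mem _ (Ideal.mul_mem_mul ha (hVm b hb)) ?_
        rw [mul_comm b (V a)]
        exact Ideal.mul_mem_mul (ih a ha) hb
      · intro x y hx hy
        rw [_root_.map_add]
        exact Ideal.add_mem _ hx hy


-- ====== polynomial side ======

/-- the linearized derivation on polynomials -/
def Dpoly (L : Matrix (Fin n) (Fin n) ℂ) :
    Derivation ℂ (MvPolynomial (Fin n) ℂ) (MvPolynomial (Fin n) ℂ) :=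
  MvPolynomial.mkDerivation ℂ (fun i => ∑ j, L i j • MvPolynomial.X j)

lemma Dpoly_X (L : Matrix (Fin n) (Fin n) ℂ) (i : Fin n) :
    Dpoly L (MvPolynomial.X i) = ∑ j, L i j • MvPolynomial.X j :=
  MvPolynomial.mkDerivation_X _ _ _

/-- homogeneity predicate -/
def Hom (q : MvPolynomial (Fin n) ℂ) (k : ℕ) : Prop :=
  ∀ β, MvPolynomial.coeff β q ≠ 0 → deg β = k

lemma Hom_zero (k : ℕ) : Hom (0 : MvPolynomial (Fin n) ℂ) k := by
  intro β h; simp at h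

lemma Hom_smul {q : MvPolynomial (Fin n) ℂ} {k : ℕ} (c : ℂ) (h : Hom q k) :
    Hom (c • q) k := by
  intro β hβ
  refine h β fun hc => hβ ?_
  rw [MvPolynomial.coeff_smul, hc, smul_zero]

lemma Hom_sub {x y : MvPolynomial (Fin n) ℂ} {k : ℕ} (hx : Hom x k) (hy : Hom y k) :
    Hom (x - y) k := by
  intro β hβ
  rw [MvPolynomial.coeff_sub] at hβ
  rcases eq_or_ne (MvPolynomial.coeff β x) 0 with h | h
  · exact hy β fun hc => hβ (by rw [h, hc, sub_zero])
  · exact hx β h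

lemma Hom_sum {ι : Type*} {s : Finset ι} {f : ι → MvPolynomial (Fin n) ℂ} {k : ℕ}
    (h : ∀ i ∈ s, Hom (f i) k) : Hom (∑ i ∈ s, f i) k := by
  intro β hβ
  rw [MvPolynomial.coeff_sum] at hβ
  obtain ⟨i, hi, hne⟩ := Finset.exists_ne_zero_of_sum_ne_zero hβ
  exact h i hi β hne

lemma Hom_mul {x y : MvPolynomial (Fin n) ℂ} {a b : ℕ} (hx : Hom x a) (hy : Hom y b) :
    Hom (x * y) (a + b) := by
  intro β hβ
  rw [MvPolynomial.coeff_mul] at hβ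
  obtain ⟨⟨u, v⟩, huv, hne⟩ := Finset.exists_ne_zero_of_sum_ne_zero hβ
  have h1 : u + v = β := Finset.HasAntidiagonal.mem_antidiagonal.mp huv
  have h2 : MvPolynomial.coeff u x ≠ 0 := left_ne_zero_of_mul hne
  have h3 : MvPolynomial.coeff v y ≠ 0 := right_ne_zero_of_mul hne
  rw [← h1, deg_add, hx u h2, hy v h3]

lemma Hom_monomial (β : Fin n →₀ ℕ) (c : ℂ) : Hom (MvPolynomial.monomial β c) (deg β) := by
  intro γ hγ
  rw [MvPolynomial.coeff_monomial] at hγ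
  by_cases h : β = γ
  · rw [← h]
  · rw [if_neg h] at hγ; exact absurd rfl hγ

lemma Hom_X (i : Fin n) : Hom (MvPolynomial.X i : MvPolynomial (Fin n) ℂ) 1 := by
  have := Hom_monomial (Finsupp.single i 1) (1 : ℂ)
  rw [deg_single] at this
  rw [show (MvPolynomial.X i : MvPolynomial (Fin n) ℂ)
        = MvPolynomial.monomial (Finsupp.single i 1) 1 by
      rw [← MvPolynomial.X_pow_eq_monomial, pow_one]]
  exact this

lemma Hom_eq_zero {q : MvPolynomial (Fin n) ℂ} {k : ℕ} (hq : Hom q k)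
    (h : ∀ β, deg β = k → MvPolynomial.coeff β q = 0) : q = 0 := by
  apply MvPolynomial.ext
  intro β
  rw [MvPolynomial.coeff_zero]
  by_cases hd : deg β = k
  · exact h β hd
  · by_contra hc
    exact hd (hq β hc)

lemma monomial_factor {s : Fin n →₀ ℕ} {i : Fin n} (hi : s i ≠ 0) :
    MvPolynomial.monomial (s - Finsupp.single i 1) (1 : ℂ) * MvPolynomial.X i
      = MvPolynomial.monomial s 1 := by
  rw [show (MvPolynomial.X i : MvPolynomial (Fin n) ℂ)
        = MvPolynomial.monomial (Finsupp.single i 1) 1 by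
      rw [← MvPolynomial.X_pow_eq_monomial, pow_one]]
  rw [MvPolynomial.monomial_mul, one_mul]
  congr 1
  rw [tsub_add_cancel_of_le]
  rw [Finsupp.single_le_iff]
  omega

lemma deg_sub_single {s : Fin n →₀ ℕ} {i : Fin n} (hi : s i ≠ 0) :
    deg (s - Finsupp.single i 1) + 1 = deg s := by
  have h := deg_add (s - Finsupp.single i 1) (Finsupp.single i 1)
  rw [tsub_add_cancel_of_le (Finsupp.single_le_iff.mpr (by omega)), deg_single] at h
  omega

lemma Hom_Dpoly_monomial (L : Matrix (Fin n) (Fin n) ℂ) :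
    ∀ (d : ℕ) (s : Fin n →₀ ℕ), deg s = d → Hom (Dpoly L (MvPolynomial.monomial s 1)) d := by
  intro d
  induction d with
  | zero =>
      intro s hs
      rw [eq_zero_of_deg_eq_zero hs, MvPolynomial.monomial_zero', _root_.map_one,
        Derivation.map_one_eq_zero]
      exact Hom_zero 0
  | succ d ih =>
      intro s hs
      obtain ⟨i, hi⟩ := exists_ne_zero_of_deg_ne_zero (β := s) (by omega)
      rw [← monomial_factor hi, Derivation.leibniz, smul_eq_mul, smul_eq_mul]
      have hds' : deg (s - Finsupp.single i 1) = d := by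
        have := deg_sub_single hi; omega
      have h1 : Hom (MvPolynomial.monomial (s - Finsupp.single i 1) (1:ℂ)
          * Dpoly L (MvPolynomial.X i)) (d + 1) := by
        refine Hom_mul (hds' ▸ Hom_monomial _ _) ?_
        rw [Dpoly_X]
        exact Hom_sum fun j _ => Hom_smul _ (Hom_X j)
      have h2 : Hom ((MvPolynomial.X i : MvPolynomial (Fin n) ℂ)
          * Dpoly L (MvPolynomial.monomial (s - Finsupp.single i 1) 1)) (d + 1) := by
        have := Hom_mul (Hom_X i) (ih _ hds')
        rwa [Nat.add_comm 1 d] at this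
      intro β hβ
      rw [MvPolynomial.coeff_add] at hβ
      rcases eq_or_ne (MvPolynomial.coeff β (MvPolynomial.monomial (s - Finsupp.single i 1) (1:ℂ)
          * Dpoly L (MvPolynomial.X i))) 0 with h | h
      · exact h2 β fun hc => hβ (by rw [h, hc, add_zero])
      · exact h1 β h

lemma Hom_Dpoly (L : Matrix (Fin n) (Fin n) ℂ) {q : MvPolynomial (Fin n) ℂ} {k : ℕ}
    (hq : Hom q k) : Hom (Dpoly L q) k := by
  conv_lhs => rw [MvPolynomial.as_sum q]
  rw [_root_.map_sum]
  refine Hom_sum fun β hβ => ?_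
  have hc : MvPolynomial.monomial β (MvPolynomial.coeff β q)
      = MvPolynomial.coeff β q • MvPolynomial.monomial β 1 := by
    rw [MvPolynomial.smul_monomial, smul_eq_mul, mul_one]
  rw [hc, Derivation.map_smul]
  exact Hom_smul _ (Hom_Dpoly_monomial L k β (hq β (MvPolynomial.mem_support_iff.mp hβ)))


-- ====== comparing V with Dpoly on polynomial coercions ======

lemma coe_smul' (c : ℂ) (q : MvPolynomial (Fin n) ℂ) :
    ((c • q : MvPolynomial (Fin n) ℂ) : MvPowerSeries (Fin n) ℂ) = c • (q : MvPowerSeries (Fin n) ℂ) := by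
  apply MvPowerSeries.ext
  intro β
  rw [MvPolynomial.coeff_coe, _root_.map_smul, MvPolynomial.coeff_coe, MvPolynomial.coeff_smul]

lemma coe_monomial_mem_Jdeg (s : Fin n →₀ ℕ) (c : ℂ) :
    ((MvPolynomial.monomial s c : MvPolynomial (Fin n) ℂ) : MvPowerSeries (Fin n) ℂ)
      ∈ Jdeg n (deg s) := by
  rw [mem_Jdeg]
  intro β hβ
  rw [MvPolynomial.coeff_coe, MvPolynomial.coeff_monomial]
  rw [if_neg]
  intro h
  rw [h] at hβ
  omega

variable {V : Derivation ℂ (MvPowerSeries (Fin n) ℂ) (MvPowerSeries (Fin n) ℂ)}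
  {L : Matrix (Fin n) (Fin n) ℂ}

lemma V_X_sub_lin_mem
    (hVm : ∀ f ∈ mIdeal n, V f ∈ mIdeal n)
    (hL : ∀ i j, L i j = MvPowerSeries.coeff (Finsupp.single j 1) (V (MvPowerSeries.X i)))
    (i : Fin n) :
    V (MvPowerSeries.X i)
      - ((Dpoly L (MvPolynomial.X i) : MvPolynomial (Fin n) ℂ) : MvPowerSeries (Fin n) ℂ)
      ∈ Jdeg n 2 := by
  have hcoe : ∀ γ : Fin n →₀ ℕ,
      MvPowerSeries.coeff γ ((Dpoly L (MvPolynomial.X i) : MvPolynomial (Fin n) ℂ) :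
        MvPowerSeries (Fin n) ℂ)
      = ∑ j, L i j * (if Finsupp.single j 1 = γ then 1 else 0) := by
    intro γ
    rw [MvPolynomial.coeff_coe, Dpoly_X, MvPolynomial.coeff_sum]
    refine Finset.sum_congr rfl fun j _ => ?_
    rw [MvPolynomial.coeff_smul, smul_eq_mul, MvPolynomial.coeff_X']
  rw [mem_Jdeg]
  intro β hβ
  rw [_root_.map_sub, hcoe]
  rcases (by omega : deg β = 0 ∨ deg β = 1) with h0 | h1
  · have hβ0 : β = 0 := eq_zero_of_deg_eq_zero h0
    subst hβ0
    have hVX : MvPowerSeries.coeff 0 (V (MvPowerSeries.X i)) = 0 := by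
      refine mem_Jdeg.mp (mIdeal_le_Jdeg (hVm _ (X_mem_mIdeal i))) 0 ?_
      rw [deg_zero]; omega
    rw [hVX]
    rw [Finset.sum_eq_zero, sub_zero]
    intro j _
    rw [if_neg (fun hc => one_ne_zero (Finsupp.single_eq_zero.mp hc)), mul_zero]
  · obtain ⟨j', hj'⟩ := deg_eq_one h1
    subst hj'
    rw [← hL i j']
    rw [Finset.sum_eq_single j']
    · rw [if_pos rfl, mul_one, sub_self]
    · intro j _ hjj
      rw [if_neg, mul_zero]
      intro hc
      exact hjj ((Finsupp.single_left_inj one_ne_zero).mp hc)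
    · intro h; exact absurd (Finset.mem_univ j') h

lemma V_coe_monomial_sub
    (hVm : ∀ f ∈ mIdeal n, V f ∈ mIdeal n)
    (hL : ∀ i j, L i j = MvPowerSeries.coeff (Finsupp.single j 1) (V (MvPowerSeries.X i))) :
    ∀ (d : ℕ) (s : Fin n →₀ ℕ), deg s = d →
    V ((MvPolynomial.monomial s 1 : MvPolynomial (Fin n) ℂ) : MvPowerSeries (Fin n) ℂ)
      - ((Dpoly L (MvPolynomial.monomial s 1) : MvPolynomial (Fin n) ℂ) :
          MvPowerSeries (Fin n) ℂ)
      ∈ Jdeg n (d + 1) := by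
  intro d
  induction d with
  | zero =>
      intro s hs
      rw [eq_zero_of_deg_eq_zero hs, MvPolynomial.monomial_zero', _root_.map_one]
      rw [MvPolynomial.coe_one, Derivation.map_one_eq_zero, Derivation.map_one_eq_zero]
      rw [MvPolynomial.coe_zero, sub_zero]
      exact (Jdeg n 1).zero_mem
  | succ d ih =>
      intro s hs
      obtain ⟨i, hi⟩ := exists_ne_zero_of_deg_ne_zero (β := s) (by omega)
      have hds' : deg (s - Finsupp.single i 1) = d := by
        have := deg_sub_single hi; omega
      set a : MvPolynomial (Fin n) ℂ := MvPolynomial.monomial (s - Finsupp.single i 1) 1 with ha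
      rw [← monomial_factor hi]
      have key : V ((a * MvPolynomial.X i : MvPolynomial (Fin n) ℂ) : MvPowerSeries (Fin n) ℂ)
          - ((Dpoly L (a * MvPolynomial.X i) : MvPolynomial (Fin n) ℂ) : MvPowerSeries (Fin n) ℂ)
          = (a : MvPowerSeries (Fin n) ℂ)
              * (V (MvPowerSeries.X i)
                 - ((Dpoly L (MvPolynomial.X i) : MvPolynomial (Fin n) ℂ) :
                     MvPowerSeries (Fin n) ℂ))
            + (MvPowerSeries.X i)
              * (V (a : MvPowerSeries (Fin n) ℂ)
                 - ((Dpoly L a : MvPolynomial (Fin n) ℂ) : MvPowerSeries (Fin n) ℂ)) := by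
        have e1 : Dpoly L (a * MvPolynomial.X i)
            = a * Dpoly L (MvPolynomial.X i) + MvPolynomial.X i * Dpoly L a := by
          rw [Derivation.leibniz, smul_eq_mul, smul_eq_mul]
        rw [e1, MvPolynomial.coe_mul, MvPolynomial.coe_X, Derivation.leibniz,
          MvPolynomial.coe_add, MvPolynomial.coe_mul, MvPolynomial.coe_mul,
          MvPolynomial.coe_X, smul_eq_mul, smul_eq_mul]
        ring
      rw [key]
      refine (Jdeg n (d + 1 + 1)).add_mem ?_ ?_
      · have := Jdeg_mul_mem (hds' ▸ coe_monomial_mem_Jdeg (s - Finsupp.single i 1) 1)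
          (V_X_sub_lin_mem hVm hL i)
        rwa [show d + 2 = d + 1 + 1 by omega] at this
      · have hX1 : (MvPowerSeries.X i : MvPowerSeries (Fin n) ℂ) ∈ Jdeg n 1 :=
          mIdeal_le_Jdeg (X_mem_mIdeal i)
        have := Jdeg_mul_mem hX1 (ih _ hds')
        rwa [show 1 + (d + 1) = d + 1 + 1 by omega] at this

lemma V_coe_sub
    (hVm : ∀ f ∈ mIdeal n, V f ∈ mIdeal n)
    (hL : ∀ i j, L i j = MvPowerSeries.coeff (Finsupp.single j 1) (V (MvPowerSeries.X i)))
    {q : MvPolynomial (Fin n) ℂ} {k : ℕ} (hq : Hom q k) :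
    V (q : MvPowerSeries (Fin n) ℂ)
      - ((Dpoly L q : MvPolynomial (Fin n) ℂ) : MvPowerSeries (Fin n) ℂ)
      ∈ Jdeg n (k + 1) := by
  have hcoe : ∀ (s : Finset (Fin n →₀ ℕ)) (g : (Fin n →₀ ℕ) → MvPolynomial (Fin n) ℂ),
      ((∑ β ∈ s, g β : MvPolynomial (Fin n) ℂ) : MvPowerSeries (Fin n) ℂ)
      = ∑ β ∈ s, ((g β : MvPolynomial (Fin n) ℂ) : MvPowerSeries (Fin n) ℂ) := by
    intro s g
    rw [← MvPolynomial.coeToMvPowerSeries.ringHom_apply, _root_.map_sum]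
    rfl
  have key : V (q : MvPowerSeries (Fin n) ℂ)
      - ((Dpoly L q : MvPolynomial (Fin n) ℂ) : MvPowerSeries (Fin n) ℂ)
      = ∑ β ∈ q.support,
          (V ((MvPolynomial.monomial β (MvPolynomial.coeff β q) : MvPolynomial (Fin n) ℂ) :
              MvPowerSeries (Fin n) ℂ)
            - ((Dpoly L (MvPolynomial.monomial β (MvPolynomial.coeff β q)) :
                MvPolynomial (Fin n) ℂ) : MvPowerSeries (Fin n) ℂ)) := by
    conv_lhs => rw [MvPolynomial.as_sum q]
    rw [hcoe, _root_.map_sum, _root_.map_sum, hcoe, ← Finset.sum_sub_distrib]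
  rw [key]
  refine Submodule.sum_mem _ fun β hβ => ?_
  have hmono : MvPolynomial.monomial β (MvPolynomial.coeff β q)
      = MvPolynomial.coeff β q • MvPolynomial.monomial β 1 := by
    rw [MvPolynomial.smul_monomial, smul_eq_mul, mul_one]
  rw [hmono, coe_smul', Derivation.map_smul, Derivation.map_smul, coe_smul', ← smul_sub]
  exact Jdeg_smul _
    (V_coe_monomial_sub hVm hL k β (hq β (MvPolynomial.mem_support_iff.mp hβ)))


/-- products of generalized eigenvectors of a derivation -/
lemma derivation_mul_mem_maxGen {K A : Type*} [CommRing K] [CommRing A] [Algebra K A]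
    (D : Derivation K A A) (a b : K) {x y : A}
    (hx : x ∈ Module.End.maxGenEigenspace (D : A →ₗ[K] A) a)
    (hy : y ∈ Module.End.maxGenEigenspace (D : A →ₗ[K] A) b) :
    x * y ∈ Module.End.maxGenEigenspace (D : A →ₗ[K] A) (a + b) := by
  rw [Module.End.mem_maxGenEigenspace] at hx hy ⊢
  obtain ⟨k₁, h₁⟩ := hx
  obtain ⟨k₂, h₂⟩ := hy
  set E : Module.End K A := (D : A →ₗ[K] A) with hE
  let mm : A ⊗[K] A →ₗ[K] A := LinearMap.mul' K A
  set f₁ : Module.End K (A ⊗[K] A) := (E - a • 1).rTensor A with hf₁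
  set f₂ : Module.End K (A ⊗[K] A) := (E - b • 1).lTensor A with hf₂
  have hsq : (E - (a + b) • 1) ∘ₗ mm = mm ∘ₗ (f₁ + f₂) := by
    ext u v
    simp only [hf₁, hf₂, AlgebraTensorModule.curry_apply, TensorProduct.curry_apply,
      LinearMap.coe_restrictScalars, LinearMap.coe_comp, Function.comp_apply,
      LinearMap.mul'_apply, LinearMap.sub_apply, LinearMap.smul_apply, Module.End.one_apply,
      LinearMap.add_apply, LinearMap.rTensor_tmul, LinearMap.lTensor_tmul, _root_.map_add, mm]
    have hDuv : E (u * v) = u * E v + v * E u := by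
      rw [hE]
      show D (u * v) = u * D v + v * D u
      rw [Derivation.leibniz, smul_eq_mul, smul_eq_mul]
    rw [hDuv]
    simp only [Algebra.smul_def, _root_.map_add]
    ring
  have hcomm : Commute f₁ f₂ := by
    unfold Commute SemiconjBy
    ext u v
    simp only [hf₁, hf₂, AlgebraTensorModule.curry_apply, TensorProduct.curry_apply,
      LinearMap.coe_restrictScalars, Module.End.mul_apply, LinearMap.rTensor_tmul,
      LinearMap.lTensor_tmul]
  refine ⟨k₁ + k₂, ?_⟩
  have h0 : ((f₁ + f₂) ^ (k₁ + k₂)) (x ⊗ₜ[K] y) = 0 := by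
    rw [hcomm.add_pow']
    rw [LinearMap.coe_sum, Finset.sum_apply]
    apply Finset.sum_eq_zero
    rintro ⟨i, j⟩ hij
    have hij' : i + j = k₁ + k₂ := Finset.HasAntidiagonal.mem_antidiagonal.mp hij
    have hterm : ((f₁ ^ i * f₂ ^ j)) (x ⊗ₜ[K] y) = 0 := by
      rw [Module.End.mul_apply, hf₂, LinearMap.lTensor_pow, hf₁, LinearMap.rTensor_pow,
        LinearMap.lTensor_tmul, LinearMap.rTensor_tmul]
      rcases (by omega : k₁ ≤ i ∨ k₂ ≤ j) with h | h
      · rw [Module.End.pow_map_zero_of_le h h₁, TensorProduct.zero_tmul]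
      · rw [Module.End.pow_map_zero_of_le h h₂, TensorProduct.tmul_zero]
    rw [LinearMap.smul_apply, hterm, smul_zero]
  have hxy : x * y = mm (x ⊗ₜ[K] y) := (LinearMap.mul'_apply).symm
  rw [hxy, ← LinearMap.comp_apply, Module.End.commute_pow_left_of_commute hsq,
    LinearMap.comp_apply, h0, _root_.map_zero]


-- ===== the spectral core =====

variable (L : Matrix (Fin n) (Fin n) ℂ) (lam : Fin n → ℂ)

/-- endomorphism of `ℂⁿ` given by the transposed matrix -/
def Aend : Module.End ℂ (Fin n → ℂ) := Matrix.toLinAlgEquiv' Lᵀ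

/-- the linear map sending a vector to the corresponding linear form -/
def phiMap (n : ℕ) : (Fin n → ℂ) →ₗ[ℂ] MvPolynomial (Fin n) ℂ where
  toFun v := ∑ i, v i • MvPolynomial.X i
  map_add' u v := by simp [add_smul, Finset.sum_add_distrib]
  map_smul' c v := by simp [Finset.smul_sum, smul_smul]

lemma Epoly_comp_phi :
    (Dpoly L : MvPolynomial (Fin n) ℂ →ₗ[ℂ] MvPolynomial (Fin n) ℂ) ∘ₗ phiMap n
      = phiMap n ∘ₗ Aend L := by
  apply LinearMap.ext
  intro v
  simp only [LinearMap.coe_comp, Function.comp_apply, phiMap, LinearMap.coe_mk, AddHom.coe_mk]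
  rw [_root_.map_sum]
  have h1 : ∀ i : Fin n,
      (Dpoly L : MvPolynomial (Fin n) ℂ →ₗ[ℂ] MvPolynomial (Fin n) ℂ) (v i • MvPolynomial.X i)
        = ∑ j, (L i j * v i) • MvPolynomial.X j := by
    intro i
    rw [_root_.map_smul]
    rw [show (Dpoly L : MvPolynomial (Fin n) ℂ →ₗ[ℂ] MvPolynomial (Fin n) ℂ) (MvPolynomial.X i)
        = Dpoly L (MvPolynomial.X i) from rfl]
    rw [Dpoly_X, Finset.smul_sum]
    refine Finset.sum_congr rfl fun j _ => ?_
    rw [smul_smul, mul_comm]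
  simp_rw [h1]
  rw [Finset.sum_comm]
  refine Finset.sum_congr rfl fun j _ => ?_
  have h2 : (Aend L v) j = ∑ i, L i j * v i := by
    simp [Aend, Matrix.mulVec, dotProduct, Matrix.transpose_apply]
  rw [h2, Finset.sum_smul]

lemma phi_maxGen_mapsTo (c : ℂ) (v : Fin n → ℂ)
    (hv : v ∈ Module.End.maxGenEigenspace (Aend L) c) :
    phiMap n v ∈ Module.End.maxGenEigenspace
      (Dpoly L : MvPolynomial (Fin n) ℂ →ₗ[ℂ] MvPolynomial (Fin n) ℂ) c := by
  rw [Module.End.mem_maxGenEigenspace] at hv ⊢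
  obtain ⟨k, hk⟩ := hv
  refine ⟨k, ?_⟩
  have hsq : ((Dpoly L : MvPolynomial (Fin n) ℂ →ₗ[ℂ] MvPolynomial (Fin n) ℂ) - c • 1)
      ∘ₗ phiMap n = phiMap n ∘ₗ (Aend L - c • 1) := by
    apply LinearMap.ext
    intro w
    have := LinearMap.congr_fun (Epoly_comp_phi L) w
    simp only [LinearMap.coe_comp, Function.comp_apply, LinearMap.sub_apply,
      LinearMap.smul_apply, Module.End.one_apply] at this ⊢
    rw [this, _root_.map_sub, _root_.map_smul]
  have := LinearMap.congr_fun (Module.End.commute_pow_left_of_commute hsq k) v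
  simp only [LinearMap.coe_comp, Function.comp_apply] at this
  rw [this, hk, _root_.map_zero]

lemma charpoly_transpose (M : Matrix (Fin n) (Fin n) ℂ) : Mᵀ.charpoly = M.charpoly := by
  unfold Matrix.charpoly
  have h : charmatrix Mᵀ = (charmatrix M)ᵀ := by
    ext i j
    rw [Matrix.transpose_apply, charmatrix_apply, charmatrix_apply, Matrix.transpose_apply]
    congr 1
    by_cases hij : i = j
    · subst hij; rfl
    · rw [Matrix.diagonal_apply_ne _ hij, Matrix.diagonal_apply_ne _ (Ne.symm hij)]
  rw [h, Matrix.det_transpose]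

lemma Aend_eigenvalues
    (hchar : L.charpoly = ∏ i, (Polynomial.X - Polynomial.C (lam i)))
    (μ : ℂ) (hne : Module.End.maxGenEigenspace (Aend L) μ ≠ ⊥) : ∃ i, μ = lam i := by
  obtain ⟨m, hm, hm0⟩ := Submodule.exists_mem_ne_zero_of_ne_bot hne
  rw [Module.End.mem_maxGenEigenspace] at hm
  obtain ⟨k, hk⟩ := hm
  have hev : Module.End.HasEigenvalue (Aend L) μ := by
    have hgen : Module.End.HasGenEigenvalue (Aend L) μ k := by
      rw [Module.End.HasGenEigenvalue, Module.End.HasUnifEigenvalue]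
      intro hc
      have hmem : m ∈ Module.End.genEigenspace (Aend L) μ k := by
        rw [Module.End.mem_genEigenspace_nat]
        exact hk
      rw [hc] at hmem
      exact hm0 (Submodule.mem_bot ℂ |>.mp hmem)
    exact Module.End.hasEigenvalue_of_hasGenEigenvalue hgen
  have hroot : (minpoly ℂ (Aend L)).IsRoot μ := Module.End.isRoot_of_hasEigenvalue hev
  have haev : Polynomial.aeval (Aend L) (Matrix.charpoly Lᵀ) = 0 := by
    have h2 := Polynomial.aeval_algHom_apply
      (Matrix.toLinAlgEquiv' : Matrix (Fin n) (Fin n) ℂ ≃ₐ[ℂ] _) Lᵀ (Matrix.charpoly Lᵀ)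
    rw [show Aend L = Matrix.toLinAlgEquiv' Lᵀ from rfl, h2,
      Matrix.aeval_self_charpoly, _root_.map_zero]
  have hdvd : minpoly ℂ (Aend L) ∣ ∏ i, (Polynomial.X - Polynomial.C (lam i)) := by
    rw [← hchar, ← charpoly_transpose L]
    exact minpoly.dvd ℂ (Aend L) haev
  have hroot2 : Polynomial.IsRoot (∏ i, (Polynomial.X - Polynomial.C (lam i))) μ :=
    hroot.dvd hdvd
  rw [Polynomial.IsRoot, Polynomial.eval_prod] at hroot2
  obtain ⟨i, -, hi⟩ := Finset.prod_eq_zero_iff.mp hroot2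
  rw [Polynomial.eval_sub, Polynomial.eval_X, Polynomial.eval_C, sub_eq_zero] at hi
  exact ⟨i, hi⟩

lemma X_mem_iSup_maxGen
    (hchar : L.charpoly = ∏ i, (Polynomial.X - Polynomial.C (lam i))) (i : Fin n) :
    MvPolynomial.X i ∈ ⨆ j, Module.End.maxGenEigenspace
      (Dpoly L : MvPolynomial (Fin n) ℂ →ₗ[ℂ] MvPolynomial (Fin n) ℂ) (lam j) := by
  have htop : ∀ v : Fin n → ℂ,
      v ∈ ⨆ j, Module.End.maxGenEigenspace (Aend L) (lam j) := by
    intro v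
    have h := Module.End.iSup_maxGenEigenspace_eq_top (Aend L)
    have hle : (⊤ : Submodule ℂ (Fin n → ℂ))
        ≤ ⨆ j, Module.End.maxGenEigenspace (Aend L) (lam j) := by
      rw [← h]
      apply iSup_le
      intro μ
      by_cases hb : Module.End.maxGenEigenspace (Aend L) μ = ⊥
      · rw [hb]; exact bot_le
      · obtain ⟨j, rfl⟩ := Aend_eigenvalues L lam hchar μ hb
        exact le_iSup (fun j => Module.End.maxGenEigenspace (Aend L) (lam j)) j
    exact hle Submodule.mem_top
  have hφ : phiMap n (Pi.single i (1:ℂ)) = MvPolynomial.X i := by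
    have happ : phiMap n (Pi.single i (1:ℂ))
        = ∑ t, (Pi.single i (1:ℂ) : Fin n → ℂ) t • MvPolynomial.X t := rfl
    rw [happ, Finset.sum_eq_single i]
    · rw [Pi.single_eq_same, one_smul]
    · intro t _ hti
      rw [Pi.single_eq_of_ne hti, zero_smul]
    · intro h; exact absurd (Finset.mem_univ i) h
  rw [← hφ]
  have hmap : Submodule.map (phiMap n)
      (⨆ j, Module.End.maxGenEigenspace (Aend L) (lam j))
      ≤ ⨆ j, Module.End.maxGenEigenspace
        (Dpoly L : MvPolynomial (Fin n) ℂ →ₗ[ℂ] MvPolynomial (Fin n) ℂ) (lam j) := by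
    rw [Submodule.map_iSup]
    exact iSup_mono fun j => Submodule.map_le_iff_le_comap.mpr
      fun v hv => phi_maxGen_mapsTo L (lam j) v hv
  exact hmap ⟨_, htop (Pi.single i (1:ℂ)), rfl⟩


/-- values of the additive semigroup generated by the eigenvalues, with total weight `k` -/
def SSset (k : ℕ) : Set ℂ :=
  {w | ∃ α : Fin n →₀ ℕ, (∑ i, α i) = k ∧ w = ∑ i, (α i : ℂ) * lam i}

/-- sum of generalized eigenspaces over `SSset lam k` -/
def Nsub (k : ℕ) : Submodule ℂ (MvPolynomial (Fin n) ℂ) :=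
  ⨆ w : SSset lam k, Module.End.maxGenEigenspace
    (Dpoly L : MvPolynomial (Fin n) ℂ →ₗ[ℂ] MvPolynomial (Fin n) ℂ) (w : ℂ)

lemma lam_add_SS {k : ℕ} {w : ℂ} (hw : w ∈ SSset lam k) (i : Fin n) :
    lam i + w ∈ SSset lam (k + 1) := by
  obtain ⟨α, hsum, hval⟩ := hw
  set α' : Fin n →₀ ℕ := α + Finsupp.single i 1 with hα'
  refine ⟨α', ?_, ?_⟩
  · have : (∑ t, α' t) = (∑ t, α t) + ∑ t, Finsupp.single i 1 t := by
      simp [hα', Finsupp.add_apply, Finset.sum_add_distrib]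
    rw [this, hsum, show (∑ t, Finsupp.single i 1 t) = deg (Finsupp.single i 1) from rfl,
      deg_single]
  · have h1 : ∀ t, ((α' t : ℕ) : ℂ) * lam t
        = (α t : ℂ) * lam t + ((Finsupp.single i 1 t : ℕ) : ℂ) * lam t := by
      intro t
      rw [hα', Finsupp.add_apply]
      push_cast
      ring
    rw [Finset.sum_congr rfl fun t _ => h1 t, Finset.sum_add_distrib, ← hval]
    have h2 : (∑ t, ((Finsupp.single i 1 t : ℕ) : ℂ) * lam t) = lam i := by
      rw [Finset.sum_eq_single i]
      · simp
      · intro t _ hti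
        rw [Finsupp.single_apply, if_neg (Ne.symm hti)]
        simp
      · intro h; exact absurd (Finset.mem_univ i) h
    rw [h2, add_comm]

lemma lam_mem_SS1 (i : Fin n) : lam i ∈ SSset lam 1 := by
  refine ⟨Finsupp.single i 1, ?_, ?_⟩
  · rw [show (∑ t, Finsupp.single i 1 t) = deg (Finsupp.single i 1) from rfl, deg_single]
  · rw [Finset.sum_eq_single i]
    · simp
    · intro t _ hti
      rw [Finsupp.single_apply, if_neg (Ne.symm hti)]
      simp
    · intro h; exact absurd (Finset.mem_univ i) h

lemma iSup_lam_le_Nsub1 :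
    (⨆ j, Module.End.maxGenEigenspace
      (Dpoly L : MvPolynomial (Fin n) ℂ →ₗ[ℂ] MvPolynomial (Fin n) ℂ) (lam j))
      ≤ Nsub L lam 1 := by
  apply iSup_le
  intro j
  exact le_iSup (fun w : SSset lam 1 => Module.End.maxGenEigenspace
    (Dpoly L : MvPolynomial (Fin n) ℂ →ₗ[ℂ] MvPolynomial (Fin n) ℂ) (w : ℂ))
    ⟨lam j, lam_mem_SS1 lam j⟩

lemma mulX_mem_Nsub
    (hchar : L.charpoly = ∏ i, (Polynomial.X - Polynomial.C (lam i)))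
    {k : ℕ} {y : MvPolynomial (Fin n) ℂ} (hy : y ∈ Nsub L lam k) (j : Fin n) :
    MvPolynomial.X j * y ∈ Nsub L lam (k + 1) := by
  refine Submodule.iSup_induction _ (motive := fun y => MvPolynomial.X j * y ∈ Nsub L lam (k + 1))
    hy ?_ ?_ ?_
  · rintro ⟨w, hw⟩ x hx
    have hmap : Submodule.map (LinearMap.mulRight ℂ x)
        (⨆ t, Module.End.maxGenEigenspace
          (Dpoly L : MvPolynomial (Fin n) ℂ →ₗ[ℂ] MvPolynomial (Fin n) ℂ) (lam t))
        ≤ Nsub L lam (k + 1) := by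
      rw [Submodule.map_iSup]
      apply iSup_le
      intro t
      have h1 : Submodule.map (LinearMap.mulRight ℂ x)
          (Module.End.maxGenEigenspace
            (Dpoly L : MvPolynomial (Fin n) ℂ →ₗ[ℂ] MvPolynomial (Fin n) ℂ) (lam t))
          ≤ Module.End.maxGenEigenspace
            (Dpoly L : MvPolynomial (Fin n) ℂ →ₗ[ℂ] MvPolynomial (Fin n) ℂ) (lam t + w) := by
        apply Submodule.map_le_iff_le_comap.mpr
        intro z hz
        exact derivation_mul_mem_maxGen (Dpoly L) (lam t) w hz hx
      refine le_trans h1 ?_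
      exact le_iSup (fun w : SSset lam (k+1) => Module.End.maxGenEigenspace
          (Dpoly L : MvPolynomial (Fin n) ℂ →ₗ[ℂ] MvPolynomial (Fin n) ℂ) (w : ℂ))
        ⟨lam t + w, lam_add_SS lam hw t⟩
    have hXj : MvPolynomial.X j * x = (LinearMap.mulRight ℂ x) (MvPolynomial.X j) := by
      rw [LinearMap.mulRight_apply]
    rw [hXj]
    exact hmap ⟨_, X_mem_iSup_maxGen L lam hchar j, rfl⟩
  · show MvPolynomial.X j * (0 : MvPolynomial (Fin n) ℂ) ∈ Nsub L lam (k + 1)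
    rw [mul_zero]; exact Submodule.zero_mem _
  · intro a b ha hb
    show MvPolynomial.X j * (a + b) ∈ Nsub L lam (k + 1)
    rw [mul_add]
    exact Submodule.add_mem _ ha hb

lemma monomial_mem_Nsub
    (hchar : L.charpoly = ∏ i, (Polynomial.X - Polynomial.C (lam i))) :
    ∀ k, 1 ≤ k → ∀ β : Fin n →₀ ℕ, deg β = k →
      MvPolynomial.monomial β (1 : ℂ) ∈ Nsub L lam k := by
  intro k hk1
  induction k, hk1 using Nat.le_induction with
  | base =>
      intro β hβ
      obtain ⟨j, rfl⟩ := deg_eq_one hβ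
      rw [show MvPolynomial.monomial (Finsupp.single j 1) (1:ℂ) = MvPolynomial.X j by
        rw [← MvPolynomial.X_pow_eq_monomial, pow_one]]
      refine iSup_lam_le_Nsub1 L lam ?_
      have := X_mem_iSup_maxGen L lam hchar j
      exact this
  | succ k hk ih =>
      intro β hβ
      obtain ⟨i, hi⟩ := exists_ne_zero_of_deg_ne_zero (β := β) (by omega)
      have hds' : deg (β - Finsupp.single i 1) = k := by
        have := deg_sub_single hi; omega
      rw [← monomial_factor hi, mul_comm]
      exact mulX_mem_Nsub L lam hchar (ih _ hds') i

theorem eigenvector_SS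
    (hchar : L.charpoly = ∏ i, (Polynomial.X - Polynomial.C (lam i)))
    {k : ℕ} (hk : 1 ≤ k) {q : MvPolynomial (Fin n) ℂ} (hq : Hom q k) (hq0 : q ≠ 0)
    {μ : ℂ} (heig : Dpoly L q = μ • q) :
    ∃ α : Fin n →₀ ℕ, (∑ i, α i) = k ∧ μ = ∑ i, (α i : ℂ) * lam i := by
  have hqN : q ∈ Nsub L lam k := by
    have hsum : (∑ β ∈ q.support, MvPolynomial.monomial β (MvPolynomial.coeff β q))
        ∈ Nsub L lam k := by
      refine Submodule.sum_mem _ fun β hβ => ?_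
      have hmono : MvPolynomial.monomial β (MvPolynomial.coeff β q)
          = MvPolynomial.coeff β q • MvPolynomial.monomial β 1 := by
        rw [MvPolynomial.smul_monomial, smul_eq_mul, mul_one]
      rw [hmono]
      exact Submodule.smul_mem _ _
        (monomial_mem_Nsub L lam hchar k hk β (hq β (MvPolynomial.mem_support_iff.mp hβ)))
    rwa [← MvPolynomial.as_sum q] at hsum
  have hqmax : q ∈ Module.End.maxGenEigenspace
      (Dpoly L : MvPolynomial (Fin n) ℂ →ₗ[ℂ] MvPolynomial (Fin n) ℂ) μ := by
    rw [Module.End.mem_maxGenEigenspace]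
    refine ⟨1, ?_⟩
    rw [pow_one, LinearMap.sub_apply, LinearMap.smul_apply, Module.End.one_apply]
    rw [show (Dpoly L : MvPolynomial (Fin n) ℂ →ₗ[ℂ] MvPolynomial (Fin n) ℂ) q
      = Dpoly L q from rfl, heig, sub_self]
  by_contra hno
  have hμ : μ ∉ SSset lam k := by
    intro hc
    obtain ⟨α, h1, h2⟩ := hc
    exact hno ⟨α, h1, h2⟩
  have indep := Module.End.independent_maxGenEigenspace
    (Dpoly L : MvPolynomial (Fin n) ℂ →ₗ[ℂ] MvPolynomial (Fin n) ℂ)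
  have hdisj := indep μ
  have hle : Nsub L lam k ≤ ⨆ w, ⨆ (_ : w ≠ μ), Module.End.maxGenEigenspace
      (Dpoly L : MvPolynomial (Fin n) ℂ →ₗ[ℂ] MvPolynomial (Fin n) ℂ) w := by
    apply iSup_le
    rintro ⟨w, hw⟩
    have hwμ : w ≠ μ := by rintro rfl; exact hμ hw
    exact le_iSup₂ (f := fun w (_ : w ≠ μ) => Module.End.maxGenEigenspace
      (Dpoly L : MvPolynomial (Fin n) ℂ →ₗ[ℂ] MvPolynomial (Fin n) ℂ) w) w hwμ
  have : q = 0 := (Submodule.disjoint_def.mp hdisj) q hqmax (hle hqN)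
  exact hq0 this


end

end JetSpectrumAux

open JetSpectrumAux

/-- Let `V` be a derivation of `ℂ[[x₁,…,xₙ]]` preserving the maximal ideal `𝔪`, with
linear part having eigenvalues `λ₁,…,λₙ`. Every eigenvalue `μ` of the induced operator
`j^p V` on `𝔪/𝔪^(p+1)` (i.e. `μ` admitting an eigenvector: some `f ∈ 𝔪`, `f ∉ 𝔪^(p+1)`,
with `V f ≡ μ f mod 𝔪^(p+1)`) lies in the additive semigroup
`{Σᵢ αᵢλᵢ : α ∈ ℕⁿ, 1 ≤ |α| ≤ p}` generated by `λ₁,…,λₙ`. -/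
theorem derivation_jet_spectrum_subset (n : ℕ)
    (𝔪 : Ideal (MvPowerSeries (Fin n) ℂ))
    (h𝔪 : 𝔪 = Ideal.span (Set.range (X : Fin n → MvPowerSeries (Fin n) ℂ)))
    (V : Derivation ℂ (MvPowerSeries (Fin n) ℂ) (MvPowerSeries (Fin n) ℂ))
    (hVm : ∀ f ∈ 𝔪, V f ∈ 𝔪)
    (L : Matrix (Fin n) (Fin n) ℂ)
    (hL : ∀ i j, L i j = coeff (Finsupp.single j 1) (V (X i)))
    (lam : Fin n → ℂ)
    (hchar : L.charpoly = ∏ i, (Polynomial.X - Polynomial.C (lam i)))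
    (p : ℕ) (μ : ℂ)
    (hμ : ∃ f : MvPowerSeries (Fin n) ℂ,
      f ∈ 𝔪 ∧ f ∉ 𝔪 ^ (p + 1) ∧ V f - μ • f ∈ 𝔪 ^ (p + 1)) :
    ∃ α : Fin n →₀ ℕ, 1 ≤ (∑ i, α i) ∧ (∑ i, α i) ≤ p ∧
      μ = ∑ i, (α i : ℂ) * lam i := by
  classical
  obtain ⟨f, hf, hfp, heig⟩ := hμ
  have h𝔪' : 𝔪 = mIdeal n := h𝔪
  rw [h𝔪'] at hf hfp heig
  have hVm' : ∀ g ∈ mIdeal n, V g ∈ mIdeal n := by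
    intro g hg
    have := hVm g (h𝔪' ▸ hg)
    rwa [h𝔪'] at this
  -- the exact order of vanishing
  have hex : ∃ m, f ∉ mIdeal n ^ (m + 1) := ⟨p, hfp⟩
  set k := Nat.find hex with hkdef
  have hku : f ∉ mIdeal n ^ (k + 1) := Nat.find_spec hex
  have hkp : k ≤ p := Nat.find_min' hex hfp
  have hk1 : 1 ≤ k := by
    by_contra hc
    have hk0 : k = 0 := by omega
    rw [hk0, pow_one] at hku
    exact hku hf
  have hfk : f ∈ mIdeal n ^ k := by
    have hlt : k - 1 < k := by omega
    have := Nat.find_min hex hlt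
    rw [not_not] at this
    have hkk : k - 1 + 1 = k := by omega
    rwa [hkk] at this
  -- the leading homogeneous part
  set B : Finset (Fin n →₀ ℕ) := Finset.finsuppAntidiag (Finset.univ : Finset (Fin n)) k
    with hBdef
  have hmemB : ∀ γ : Fin n →₀ ℕ, γ ∈ B ↔ deg γ = k := by
    intro γ
    rw [hBdef, Finset.mem_finsuppAntidiag]
    constructor
    · rintro ⟨h1, -⟩; exact h1
    · intro h1; exact ⟨h1, Finset.subset_univ _⟩
  set q : MvPolynomial (Fin n) ℂ :=
    ∑ β ∈ B, MvPolynomial.monomial β (MvPowerSeries.coeff β f) with hqdef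
  have hcoeffq : ∀ γ, MvPolynomial.coeff γ q
      = if deg γ = k then MvPowerSeries.coeff γ f else 0 := by
    intro γ
    rw [hqdef, MvPolynomial.coeff_sum]
    have : ∀ β ∈ B, MvPolynomial.coeff γ (MvPolynomial.monomial β (MvPowerSeries.coeff β f))
        = if β = γ then MvPowerSeries.coeff β f else 0 := by
      intro β _
      rw [MvPolynomial.coeff_monomial]
    rw [Finset.sum_congr rfl this, Finset.sum_ite_eq' B γ (fun β => MvPowerSeries.coeff β f)]
    by_cases hmem : γ ∈ B
    · rw [if_pos hmem, if_pos ((hmemB γ).mp hmem)]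
    · rw [if_neg hmem, if_neg (fun hc => hmem ((hmemB γ).mpr hc))]
  have Hq : Hom q k := by
    intro β hβ
    rw [hcoeffq] at hβ
    by_cases h : deg β = k
    · exact h
    · rw [if_neg h] at hβ; exact absurd rfl hβ
  have hfJk : f ∈ Jdeg n k := pow_mIdeal_le_Jdeg k hfk
  have hr : f - (q : MvPowerSeries (Fin n) ℂ) ∈ Jdeg n (k + 1) := by
    rw [mem_Jdeg]
    intro β hβ
    rw [_root_.map_sub, MvPolynomial.coeff_coe, hcoeffq]
    by_cases h : deg β = k
    · rw [if_pos h, sub_self]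
    · rw [if_neg h, sub_zero]
      exact mem_Jdeg.mp hfJk β (by omega)
  have hrM : f - (q : MvPowerSeries (Fin n) ℂ) ∈ mIdeal n ^ (k + 1) :=
    Jdeg_le_pow_mIdeal _ hr
  have hq0 : q ≠ 0 := by
    intro h0
    apply hku
    apply Jdeg_le_pow_mIdeal
    rw [mem_Jdeg]
    intro β hβ
    by_cases h : deg β = k
    · have := hcoeffq β
      rw [h0, MvPolynomial.coeff_zero, if_pos h] at this
      exact this.symm
    · exact mem_Jdeg.mp hfJk β (by omega)
  have hVr : V (f - (q : MvPowerSeries (Fin n) ℂ)) ∈ Jdeg n (k + 1) :=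
    pow_mIdeal_le_Jdeg _ (V_mem_pow V hVm' (k + 1) _ hrM)
  have hVfμ : V f - μ • f ∈ Jdeg n (k + 1) := by
    apply pow_mIdeal_le_Jdeg
    exact Ideal.pow_le_pow_right (by omega) heig
  have hVq := V_coe_sub hVm' hL Hq
  have hμr : μ • (f - (q : MvPowerSeries (Fin n) ℂ)) ∈ Jdeg n (k + 1) := Jdeg_smul μ hr
  have hsubV : V (f - (q : MvPowerSeries (Fin n) ℂ))
      = V f - V (q : MvPowerSeries (Fin n) ℂ) :=
    _root_.map_sub (V : MvPowerSeries (Fin n) ℂ →ₗ[ℂ] MvPowerSeries (Fin n) ℂ) f _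
  have key : ((Dpoly L q : MvPolynomial (Fin n) ℂ) : MvPowerSeries (Fin n) ℂ)
        - μ • (q : MvPowerSeries (Fin n) ℂ)
      = -(V (q : MvPowerSeries (Fin n) ℂ)
          - ((Dpoly L q : MvPolynomial (Fin n) ℂ) : MvPowerSeries (Fin n) ℂ))
        - V (f - (q : MvPowerSeries (Fin n) ℂ))
        + (V f - μ • f)
        + μ • (f - (q : MvPowerSeries (Fin n) ℂ)) := by
    rw [hsubV, smul_sub]
    abel
  have hDq : ((Dpoly L q : MvPolynomial (Fin n) ℂ) : MvPowerSeries (Fin n) ℂ)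
      - μ • (q : MvPowerSeries (Fin n) ℂ) ∈ Jdeg n (k + 1) := by
    rw [key]
    exact Submodule.add_mem _ (Submodule.add_mem _
      (Submodule.sub_mem _ (Submodule.neg_mem _ hVq) hVr) hVfμ) hμr
  have heq : Dpoly L q = μ • q := by
    rw [← sub_eq_zero]
    apply Hom_eq_zero (Hom_sub (Hom_Dpoly L Hq) (Hom_smul μ Hq))
    intro β hβ
    have hmem := mem_Jdeg.mp hDq β (by omega)
    rw [_root_.map_sub, _root_.map_smul, MvPolynomial.coeff_coe, MvPolynomial.coeff_coe] at hmem
    rw [MvPolynomial.coeff_sub, MvPolynomial.coeff_smul]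
    exact hmem
  obtain ⟨α, hαsum, hαval⟩ := eigenvector_SS L lam hchar hk1 Hq hq0 heq
  exact ⟨α, by omega, by omega, hαval⟩
end
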